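/- arXiv:2601.10881 — 5 statements merged into one kernel-verified Lean document; each statement's English description precedes it below -/
import Mathlib

section
/- Let G be a finite simple graph, let ∂Z be a K-cut of G that does not cross any K-cut of G, and let (T, w) be a safe tree in G (with parameter K) such that T ∩ ∂Z ≠ ∅. Then all edges of T ∩ ∂Z have a common endpoint; that is, there is a vertex x of G such that every edge of T belonging to ∂Z is incident to x. -/
open SimpleGraph

variable {V : Type*}

/-- The cut `∂X`: the set of edges of `G` with exactly one endpoint in `X`. -/
def cutEdges (G : SimpleGraph V) (X : Set V) : Set (Sym2 V) :=
  {e | e ∈ G.edgeSet ∧ ∃ u v, e = s(u, v) ∧ u ∈ X ∧ v ∉ X}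

/-- `G` is `K`-edge-connected: at least two vertices, connected, and every cut has
at least `K` edges. -/
def KEdgeConnected (G : SimpleGraph V) (K : ℕ) : Prop :=
  Nontrivial V ∧ G.Connected ∧
    ∀ X : Set V, X.Nonempty → X ≠ Set.univ → K ≤ (cutEdges G X).ncard

/-- `∂X` is a `K`-cut. -/
def IsKCut (G : SimpleGraph V) (K : ℕ) (X : Set V) : Prop :=
  X.Nonempty ∧ X ≠ Set.univ ∧ (cutEdges G X).ncard = K

/-- The cuts `∂X` and `∂Y` cross. -/
def Crossing (X Y : Set V) : Prop :=
  (X ∩ Y).Nonempty ∧ (X ∩ Yᶜ).Nonempty ∧ (Xᶜ ∩ Y).Nonempty ∧ (Xᶜ ∩ Yᶜ).Nonempty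

/-- The set of vertices reachable from `u` in `T` after deleting the edge `e`;
for a spanning tree `T` and an edge `e` of `T` with endpoint `u`, this is the shore
of the cut induced by `e` containing `u`. -/
def treeSide (T : SimpleGraph V) (u : V) (e : Sym2 V) : Set V :=
  {x | (T.deleteEdges {e}).Reachable u x}

/-- The congestion of the edge `(u,v)` of a spanning tree `T` of `G`. -/
noncomputable def edgeCong (G T : SimpleGraph V) (u v : V) : ℕ :=
  (cutEdges G (treeSide T u s(u, v))).ncard

/-- The spanning tree `T` of `G` has congestion at most `K`. -/
def CongAtMost (G T : SimpleGraph V) (K : ℕ) : Prop :=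
  ∀ u v, T.Adj u v → edgeCong G T u v ≤ K

/-- The congestion of a spanning tree `T` of `G`. -/
noncomputable def treeCongestion (G T : SimpleGraph V) : ℕ :=
  sSup {n | ∃ u v, T.Adj u v ∧ n = edgeCong G T u v}

/-- The spanning-tree congestion of `G`. -/
noncomputable def stc (G : SimpleGraph V) : ℕ :=
  sInf {n | ∃ T : SimpleGraph V, T ≤ G ∧ T.IsTree ∧ treeCongestion G T = n}

/-- `T_out(w,e)`: the vertex set of the component of the tree `H − e` not containing `w`
(the vertices of `H` that are no longer reachable from `w` after deleting `e`). -/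
def treeOut (G : SimpleGraph V) (H : G.Subgraph) (w : V) (e : Sym2 V) : Set V :=
  {x ∈ H.verts | ¬ (H.deleteEdges {e}).spanningCoe.Reachable w x}

/-- The rooted tree `(H, w)` is safe (with parameter `K`). -/
def SafeTree (G : SimpleGraph V) (K : ℕ) (H : G.Subgraph) (w : V) : Prop :=
  ∀ e ∈ H.edgeSet, (cutEdges G (treeOut G H w e)).ncard = K

/-- `V(∂X)`: the set of endpoints of edges of the cut `∂X`. -/
def cutVerts (G : SimpleGraph V) (X : Set V) : Set V :=
  {v | ∃ e ∈ cutEdges G X, v ∈ e}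

/-- `w` is a hub for `Z`: `w ∈ V(∂Z)` and there is a spanning tree `H` of the subgraph
of `G` induced by `Z ∪ {w}` such that `(H, w)` is a safe tree. -/
def IsHub (G : SimpleGraph V) (K : ℕ) (Z : Set V) (w : V) : Prop :=
  w ∈ cutVerts G Z ∧
    ∃ H : G.Subgraph, H.verts = Z ∪ {w} ∧ H.coe.IsTree ∧ SafeTree G K H w

/-- `H̃(Z)`: the set of all hubs for `Z`. -/
def hubSet (G : SimpleGraph V) (K : ℕ) (Z : Set V) : Set V :=
  {w | IsHub G K Z w}

/-- `N(S)`: the set of vertices adjacent in `G` to some vertex of `S`. -/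
def nbrSet (G : SimpleGraph V) (S : Set V) : Set V :=
  {v | ∃ u ∈ S, G.Adj u v}

/-- Edges of `∂X` with both endpoints in `S`. -/
def cutRestrict (G : SimpleGraph V) (X S : Set V) : Set (Sym2 V) :=
  {e ∈ cutEdges G X | ∀ v ∈ e, v ∈ S}


section AuxLemmas

variable {α : Type*}

private lemma split_reach {G' : SimpleGraph α} (p q : α) {u v : α}
    (W : G'.Walk u v) :
    (G'.deleteEdges {s(p,q)}).Reachable u v ∨
      ((G'.deleteEdges {s(p,q)}).Reachable u p ∧ (G'.deleteEdges {s(p,q)}).Reachable q v) ∨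
      ((G'.deleteEdges {s(p,q)}).Reachable u q ∧ (G'.deleteEdges {s(p,q)}).Reachable p v) := by
  induction W with
  | nil => exact Or.inl (Reachable.refl _)
  | @cons u x v h W ih =>
    by_cases hg : s(u, x) = s(p, q)
    · rcases Sym2.eq_iff.mp hg with ⟨rfl, rfl⟩ | ⟨rfl, rfl⟩
      · rcases ih with h1 | ⟨h2a, h2b⟩ | ⟨h3a, h3b⟩
        · exact Or.inr (Or.inl ⟨Reachable.refl _, h1⟩)
        · exact Or.inr (Or.inl ⟨Reachable.refl _, h2b⟩)
        · exact Or.inl h3b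
      · rcases ih with h1 | ⟨h2a, h2b⟩ | ⟨h3a, h3b⟩
        · exact Or.inr (Or.inr ⟨Reachable.refl _, h1⟩)
        · exact Or.inl h2b
        · exact Or.inr (Or.inr ⟨Reachable.refl _, h3b⟩)
    · have hadj : (G'.deleteEdges {s(p,q)}).Adj u x := by
        rw [SimpleGraph.deleteEdges_adj]
        exact ⟨h, by simpa using hg⟩
      rcases ih with h1 | ⟨h2a, h2b⟩ | ⟨h3a, h3b⟩
      · exact Or.inl (hadj.reachable.trans h1)
      · exact Or.inr (Or.inl ⟨hadj.reachable.trans h2a, h2b⟩)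
      · exact Or.inr (Or.inr ⟨hadj.reachable.trans h3a, h3b⟩)

private lemma path_edge_split {G' : SimpleGraph α} {p q : α} :
    ∀ {u v : α} (W : G'.Walk u v), W.edges.Nodup → s(p,q) ∈ W.edges →
      ((G'.deleteEdges {s(p,q)}).Reachable u p ∧ (G'.deleteEdges {s(p,q)}).Reachable q v) ∨
      ((G'.deleteEdges {s(p,q)}).Reachable u q ∧ (G'.deleteEdges {s(p,q)}).Reachable p v) := by
  intro u v W
  induction W with
  | nil => intro _ h; simp at h
  | @cons u x v h W ih =>
    intro hnd hmem
    rw [Walk.edges_cons, List.nodup_cons] at hnd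
    rw [Walk.edges_cons, List.mem_cons] at hmem
    rcases hmem with heq | hmem
    · have hnot : ∀ e ∈ W.edges, e ∉ ({s(p,q)} : Set (Sym2 α)) := by
        intro e he hh
        rw [Set.mem_singleton_iff] at hh
        subst hh
        rw [heq] at he
        exact hnd.1 he
      have hRxv : (G'.deleteEdges {s(p,q)}).Reachable x v := ⟨W.toDeleteEdges _ hnot⟩
      rcases Sym2.eq_iff.mp heq.symm with ⟨rfl, rfl⟩ | ⟨rfl, rfl⟩
      · exact Or.inl ⟨Reachable.refl _, hRxv⟩
      · exact Or.inr ⟨Reachable.refl _, hRxv⟩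
    · have hne : s(u,x) ≠ s(p,q) := fun hh => hnd.1 (hh ▸ hmem)
      have hadj : (G'.deleteEdges {s(p,q)}).Adj u x := by
        rw [SimpleGraph.deleteEdges_adj]
        exact ⟨h, by simpa using hne⟩
      rcases ih hnd.2 hmem with ⟨h1, h2⟩ | ⟨h1, h2⟩
      · exact Or.inl ⟨hadj.reachable.trans h1, h2⟩
      · exact Or.inr ⟨hadj.reachable.trans h1, h2⟩

private lemma exists_edge_ne {G' : SimpleGraph α} {e f : Sym2 α}
    (hdisj : ∀ x, ¬(x ∈ e ∧ x ∈ f)) :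
    ∀ {u v : α} (W : G'.Walk u v), u ∈ e → v ∈ f → u ≠ v →
      ∃ g ∈ W.edges, g ≠ e ∧ g ≠ f := by
  intro u v W
  induction W with
  | nil => intro _ _ hne; exact absurd rfl hne
  | @cons u x v h W ih =>
    intro hu hv _
    by_cases h1 : s(u, x) = e
    · have hx : x ∈ e := by rw [← h1]; simp
      have hxv : x ≠ v := fun hh => hdisj v ⟨hh ▸ hx, hv⟩
      obtain ⟨g, hg, hge, hgf⟩ := ih hx hv hxv
      exact ⟨g, by rw [Walk.edges_cons]; exact List.mem_cons_of_mem _ hg, hge, hgf⟩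
    · by_cases h2 : s(u, x) = f
      · exact absurd ⟨hu, h2 ▸ (by simp : u ∈ s(u,x))⟩ (hdisj u)
      · exact ⟨s(u,x), by rw [Walk.edges_cons]; exact List.mem_cons_self, h1, h2⟩

private lemma lift_reach {V : Type*} {G : SimpleGraph V} {H : G.Subgraph}
    {p q : V} (hp : p ∈ H.verts) (hq : q ∈ H.verts) :
    ∀ {u v : V} (_ : ((H.deleteEdges {s(p,q)}).spanningCoe).Walk u v)
      (hu : u ∈ H.verts) (hv : v ∈ H.verts),
      (H.coe.deleteEdges {s(⟨p,hp⟩,⟨q,hq⟩)}).Reachable ⟨u,hu⟩ ⟨v,hv⟩ := by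
  intro u v W
  induction W with
  | nil => intro hu hv; exact Reachable.refl _
  | @cons u x v h W ih =>
    intro hu hv
    have h' : (H.deleteEdges {s(p,q)}).Adj u x := h
    rw [SimpleGraph.Subgraph.deleteEdges_adj] at h'
    have hx : x ∈ H.verts := h'.1.snd_mem
    have hadj : (H.coe.deleteEdges {s(⟨p,hp⟩,⟨q,hq⟩)}).Adj ⟨u,hu⟩ ⟨x,hx⟩ := by
      rw [SimpleGraph.deleteEdges_adj]
      refine ⟨h'.1, ?_⟩
      intro hh
      rw [Set.mem_singleton_iff] at hh
      have h2 := congrArg (Sym2.map (Subtype.val : H.verts → V)) hh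
      rw [Sym2.map_pair_eq, Sym2.map_pair_eq] at h2
      exact h'.2 (by rw [Set.mem_singleton_iff]; exact h2)
    exact hadj.reachable.trans (ih hx hv)

end AuxLemmas

/-- If `∂Z` is a `K`-cut not crossing any `K`-cut and `(T, w)` is a
safe tree with `T ∩ ∂Z ≠ ∅`, then all edges of `T ∩ ∂Z` have a common endpoint. -/
theorem safe_tree_common_endpoint {V : Type*} [Fintype V] (K : ℕ) (G : SimpleGraph V)
    (Z : Set V) (hZ : IsKCut G K Z)
    (hnc : ∀ Y : Set V, IsKCut G K Y → ¬ Crossing Z Y)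
    (H : G.Subgraph) (w : V) (htree : H.coe.IsTree) (hw : w ∈ H.verts)
    (hsafe : SafeTree G K H w)
    (hne : (H.edgeSet ∩ cutEdges G Z).Nonempty) :
    ∃ x : V, ∀ e ∈ H.edgeSet ∩ cutEdges G Z, x ∈ e := by
  classical
  obtain ⟨e₀, he₀⟩ := hne
  -- K is positive
  have hKpos : 0 < K := by
    have hpos : 0 < (cutEdges G Z).ncard :=
      (Set.ncard_pos (Set.toFinite _)).mpr ⟨e₀, he₀.2⟩
    rwa [hZ.2.2] at hpos
  -- every treeOut set is a K-cut
  have hkcut : ∀ g ∈ H.edgeSet, IsKCut G K (treeOut G H w g) := by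
    intro g hg
    refine ⟨?_, ?_, hsafe g hg⟩
    · by_contra hemp
      rw [Set.not_nonempty_iff_eq_empty] at hemp
      have h0 := hsafe g hg
      rw [hemp] at h0
      have hcempty : cutEdges G (∅ : Set V) = ∅ := by
        ext e; simp [cutEdges]
      rw [hcempty, Set.ncard_empty] at h0
      omega
    · intro huniv
      have hwmem : w ∈ treeOut G H w g := by rw [huniv]; trivial
      exact hwmem.2 (Reachable.refl _)
  -- any two edges of T ∩ ∂Z share a vertex
  have hpair : ∀ e ∈ H.edgeSet ∩ cutEdges G Z, ∀ f ∈ H.edgeSet ∩ cutEdges G Z,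
      ∃ x, x ∈ e ∧ x ∈ f := by
    intro e he f hf
    by_contra hcom
    push_neg at hcom
    obtain ⟨heG, a, b, rfl, haZ, hbZ⟩ := he.2
    obtain ⟨hfG, c, d, rfl, hcZ, hdZ⟩ := hf.2
    have hab : H.Adj a b := SimpleGraph.Subgraph.mem_edgeSet.mp he.1
    have hcd : H.Adj c d := SimpleGraph.Subgraph.mem_edgeSet.mp hf.1
    have ha : a ∈ H.verts := hab.fst_mem
    have hb : b ∈ H.verts := hab.snd_mem
    have hc : c ∈ H.verts := hcd.fst_mem
    have hd : d ∈ H.verts := hcd.snd_mem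
    have hdisj : ∀ x : V, ¬(x ∈ s(a,b) ∧ x ∈ s(c,d)) := fun x ⟨h1, h2⟩ => hcom x h1 h2
    have hac : a ≠ c := by
      intro h
      exact hdisj a ⟨by simp, by simp [h]⟩
    -- a path in the tree from a to c
    obtain ⟨W₀⟩ := htree.1.preconnected ⟨a, ha⟩ ⟨c, hc⟩
    have hPw := W₀.toPath.2
    set Pw := W₀.toPath.1 with hPwdef
    have hane : (⟨a, ha⟩ : H.verts) ≠ ⟨c, hc⟩ := fun hh => hac (congrArg Subtype.val hh)
    have hdisj' : ∀ x : H.verts,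
        ¬(x ∈ s((⟨a,ha⟩ : H.verts), ⟨b,hb⟩) ∧ x ∈ s((⟨c,hc⟩ : H.verts), ⟨d,hd⟩)) := by
      rintro x ⟨h1, h2⟩
      apply hdisj x.val
      constructor
      · rcases Sym2.mem_iff.mp h1 with h | h <;> rw [h] <;> simp
      · rcases Sym2.mem_iff.mp h2 with h | h <;> rw [h] <;> simp
    obtain ⟨gE, hgEP, hgEe, hgEf⟩ :=
      exists_edge_ne hdisj' Pw (by simp) (by simp) hane
    revert hgEP hgEe hgEf
    induction gE using Sym2.ind with
    | _ pE qE =>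
    intro hgEP hgEe hgEf
    have hT_adj : H.coe.Adj pE qE :=
      (SimpleGraph.mem_edgeSet _).mp (Pw.edges_subset_edgeSet hgEP)
    have hpq : H.Adj pE.val qE.val := hT_adj
    have hgH : s(pE.val, qE.val) ∈ H.edgeSet := hpq
    have hinj : Function.Injective (Sym2.map (Subtype.val : H.verts → V)) :=
      Sym2.map.injective Subtype.val_injective
    have hgne_e : s(pE.val, qE.val) ≠ s(a, b) := by
      intro hh
      apply hgEe
      apply hinj
      rw [Sym2.map_pair_eq, Sym2.map_pair_eq]
      exact hh
    have hgne_f : s(pE.val, qE.val) ≠ s(c, d) := by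
      intro hh
      apply hgEf
      apply hinj
      rw [Sym2.map_pair_eq, Sym2.map_pair_eq]
      exact hh
    -- the bridge property
    have hbridge : ¬ (H.coe.deleteEdges {s(pE, qE)}).Reachable pE qE := by
      have hbr := (isAcyclic_iff_forall_edge_isBridge.mp htree.2)
        (show s(pE, qE) ∈ H.coe.edgeSet from hT_adj)
      exact isBridge_iff.mp hbr
    have hsplitP := path_edge_split Pw hPw.isTrail.edges_nodup hgEP
    -- a and c are not reachable after deleting g
    have hnR : ¬ ((H.deleteEdges {s(pE.val, qE.val)}).spanningCoe).Reachable a c := by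
      intro hR
      obtain ⟨WD⟩ := hR
      have hlift := lift_reach pE.2 qE.2 WD ha hc
      rcases hsplitP with ⟨h1, h2⟩ | ⟨h1, h2⟩
      · exact hbridge ((h1.symm.trans hlift).trans h2.symm)
      · exact hbridge (((h1.symm.trans hlift).trans h2.symm).symm)
    set X := treeOut G H w s(pE.val, qE.val) with hXdef
    have hXiff : ∀ y : V, y ∈ X ↔
        (y ∈ H.verts ∧ ¬ ((H.deleteEdges {s(pE.val, qE.val)}).spanningCoe).Reachable w y) :=
      fun y => Iff.rfl
    -- reachability from w within the tree
    have hreachS : ∀ y, y ∈ H.verts → H.spanningCoe.Reachable w y := by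
      intro y hy
      obtain ⟨Wc⟩ := htree.1.preconnected ⟨w, hw⟩ ⟨y, hy⟩
      exact ⟨Wc.map ⟨Subtype.val, fun hadj => hadj⟩⟩
    -- same-side lemma
    have hsame : ¬ ((a ∈ X) ↔ (c ∈ X)) := by
      intro hiff
      apply hnR
      rw [hXiff a, hXiff c] at hiff
      simp only [ha, hc, true_and] at hiff
      by_cases hQa : ((H.deleteEdges {s(pE.val, qE.val)}).spanningCoe).Reachable w a
      · have hQc : ((H.deleteEdges {s(pE.val, qE.val)}).spanningCoe).Reachable w c := by
          by_contra hQc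
          exact (hiff.mpr hQc) hQa
        exact hQa.symm.trans hQc
      · have hQc : ¬ ((H.deleteEdges {s(pE.val, qE.val)}).spanningCoe).Reachable w c :=
          hiff.mp hQa
        obtain ⟨Wa⟩ := hreachS a ha
        obtain ⟨Wc⟩ := hreachS c hc
        have hsa := split_reach pE.val qE.val Wa
        have hsc := split_reach pE.val qE.val Wc
        rw [SimpleGraph.Subgraph.deleteEdges_spanningCoe_eq] at hsa hsc
        rcases hsa with h1 | ⟨h2a, h2b⟩ | ⟨h3a, h3b⟩
        · exact absurd h1 hQa
        · rcases hsc with k1 | ⟨k2a, k2b⟩ | ⟨k3a, k3b⟩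
          · exact absurd k1 hQc
          · exact h2b.symm.trans k2b
          · exact absurd (k3a.trans h2b) hQa
        · rcases hsc with k1 | ⟨k2a, k2b⟩ | ⟨k3a, k3b⟩
          · exact absurd k1 hQc
          · exact absurd (k2a.trans h3b) hQa
          · exact h3b.symm.trans k3b
    -- endpoints of the same edge are on the same side
    have hsameSide : ∀ (x y : V) (hx : x ∈ H.verts) (hy : y ∈ H.verts),
        H.Adj x y → s(x,y) ≠ s(pE.val, qE.val) → ((x ∈ X) ↔ (y ∈ X)) := by
      intro x y hx hy hxy hneq
      have hadj : (H.deleteEdges {s(pE.val, qE.val)}).Adj x y := by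
        rw [SimpleGraph.Subgraph.deleteEdges_adj]
        exact ⟨hxy, by simpa using hneq⟩
      have hR : ((H.deleteEdges {s(pE.val, qE.val)}).spanningCoe).Reachable x y :=
        SimpleGraph.Adj.reachable hadj
      rw [hXiff x, hXiff y]
      simp only [hx, hy, true_and]
      exact not_congr ⟨fun h => h.trans hR, fun h => h.trans hR.symm⟩
    have hFab : (a ∈ X) ↔ (b ∈ X) :=
      hsameSide a b ha hb hab (fun hh => hgne_e hh.symm)
    have hFcd : (c ∈ X) ↔ (d ∈ X) :=
      hsameSide c d hc hd hcd (fun hh => hgne_f hh.symm)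
    by_cases haX : a ∈ X
    · have hcX : c ∉ X := fun h => hsame ⟨fun _ => h, fun _ => haX⟩
      have hbX : b ∈ X := hFab.mp haX
      have hdX : d ∉ X := fun h => hcX (hFcd.mpr h)
      exact hnc X (hkcut _ hgH) ⟨⟨a, haZ, haX⟩, ⟨c, hcZ, hcX⟩, ⟨b, hbZ, hbX⟩, ⟨d, hdZ, hdX⟩⟩
    · have hcX : c ∈ X := by
        by_contra h
        exact hsame (iff_of_false haX h)
      have hbX : b ∉ X := fun h => haX (hFab.mpr h)
      have hdX : d ∈ X := hFcd.mp hcX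
      exact hnc X (hkcut _ hgH) ⟨⟨c, hcZ, hcX⟩, ⟨a, haZ, haX⟩, ⟨d, hdZ, hdX⟩, ⟨b, hbZ, hbX⟩⟩
  -- from pairwise intersection to a common vertex
  obtain ⟨heG0, a, b, he₀eq, haZ, hbZ⟩ := he₀.2
  subst he₀eq
  by_cases hall : ∀ f ∈ H.edgeSet ∩ cutEdges G Z, a ∈ f
  · exact ⟨a, hall⟩
  · push_neg at hall
    obtain ⟨f₁, hf₁, haf₁⟩ := hall
    refine ⟨b, ?_⟩
    intro f₂ hf₂
    by_contra hbf₂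
    obtain ⟨y, hy1, hy2⟩ := hpair f₁ hf₁ f₂ hf₂
    obtain ⟨x1, hx11, hx12⟩ := hpair s(a,b) he₀ f₁ hf₁
    obtain ⟨x2, hx21, hx22⟩ := hpair s(a,b) he₀ f₂ hf₂
    have hbf₁ : b ∈ f₁ := by
      rcases Sym2.mem_iff.mp hx11 with h | h
      · rw [h] at hx12; exact absurd hx12 haf₁
      · rw [h] at hx12; exact hx12
    have haf₂ : a ∈ f₂ := by
      rcases Sym2.mem_iff.mp hx21 with h | h
      · rw [h] at hx22; exact hx22
      · rw [h] at hx22; exact absurd hx22 hbf₂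
    obtain ⟨y1, hf₁eq⟩ := Sym2.mem_iff_exists.mp hbf₁
    obtain ⟨y2, hf₂eq⟩ := Sym2.mem_iff_exists.mp haf₂
    have hyne_a : y ≠ a := fun h => haf₁ (h ▸ hy1)
    have hyne_b : y ≠ b := fun h => hbf₂ (h ▸ hy2)
    have hy1' : y = y1 := by
      rw [hf₁eq] at hy1
      rcases Sym2.mem_iff.mp hy1 with h | h
      · exact absurd h hyne_b
      · exact h
    have hy2' : y = y2 := by
      rw [hf₂eq] at hy2
      rcases Sym2.mem_iff.mp hy2 with h | h
      · exact absurd h hyne_a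
      · exact h
    subst hy1'
    subst hy2'
    have hab : H.Adj a b := SimpleGraph.Subgraph.mem_edgeSet.mp he₀.1
    have hby : H.Adj b y := SimpleGraph.Subgraph.mem_edgeSet.mp (hf₁eq ▸ hf₁.1)
    have hay : H.Adj a y := SimpleGraph.Subgraph.mem_edgeSet.mp (hf₂eq ▸ hf₂.1)
    have hane_b : a ≠ b := hab.adj_sub.ne
    have h1 : H.coe.Adj ⟨a, hab.fst_mem⟩ ⟨b, hab.snd_mem⟩ := hab
    have h2 : H.coe.Adj ⟨a, hab.fst_mem⟩ ⟨y, hby.snd_mem⟩ := hay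
    have h3 : H.coe.Adj ⟨y, hby.snd_mem⟩ ⟨b, hab.snd_mem⟩ := hby.symm
    have hP1 : (Walk.cons h1 Walk.nil).IsPath := by
      simp [Walk.isPath_def, hane_b]
    have hP2 : (Walk.cons h2 (Walk.cons h3 Walk.nil)).IsPath := by
      simp [Walk.isPath_def, hane_b, Ne.symm hyne_a, hyne_b]
    have heqp := isAcyclic_iff_path_unique.mp htree.2
      ⟨Walk.cons h1 Walk.nil, hP1⟩ ⟨Walk.cons h2 (Walk.cons h3 Walk.nil), hP2⟩
    have hlen := congrArg (fun pp : H.coe.Path ⟨a, hab.fst_mem⟩ ⟨b, hab.snd_mem⟩ =>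
      pp.1.length) heqp
    simp at hlen
end

section
/- Let G be a K-edge-connected finite simple graph, let Z ⊆ V(G) be such that ∂Z is a K-cut, and let v ∈ Z and pairwise disjoint nonempty sets Z_1, ..., Z_t (each not containing v) be such that Z = {v} ∪ Z_1 ∪ ... ∪ Z_t, each ∂Z_i is a K-cut, v ∈ V(∂Z) and v ∈ V(∂Z_i) for all i = 1, ..., t, and such that every K-cut of G having a shore X with X ⊊ Z satisfies X ⊆ Z_i for some i. Then: if v ∈ H̃(Z_i) for all i = 1, ..., t, we have H̃(Z) = {v} ∪ (N(v) ∖ Z); and otherwise H̃(Z) = ∅. -/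
open SimpleGraph

variable {V : Type*}

namespace HubAux

variable {G : SimpleGraph V}


/-- spanning reachability from coe reachability -/
lemma reach_spanning_of_coe {H : G.Subgraph} {a b : H.verts}
    (h : H.coe.Reachable a b) : H.spanningCoe.Reachable a.1 b.1 :=
  h.map ⟨Subtype.val, fun hadj => hadj⟩

/-- coe reachability from a spanning walk -/
lemma reach_coe_of_spanning {H : G.Subgraph} {x y : V} (p : H.spanningCoe.Walk x y) :
    ∀ hx : x ∈ H.verts, ∃ hy : y ∈ H.verts, H.coe.Reachable ⟨x, hx⟩ ⟨y, hy⟩ := by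
  induction p with
  | nil => exact fun hx => ⟨hx, Reachable.refl _⟩
  | @cons a c b h q ih =>
    intro hx
    have hc : c ∈ H.verts := (Subgraph.Adj.snd_mem (h : H.Adj a c))
    obtain ⟨hy, hr⟩ := ih hc
    exact ⟨hy, (SimpleGraph.Adj.reachable (by exact h : H.coe.Adj ⟨a, hx⟩ ⟨c, hc⟩)).trans hr⟩

lemma spanning_reach_mono {H H' : G.Subgraph} (hle : H ≤ H') {x y : V}
    (h : H.spanningCoe.Reachable x y) : H'.spanningCoe.Reachable x y :=
  h.mono (Subgraph.spanningCoe_le_of_le hle)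

lemma deleteEdges_le_of_le {H H' : G.Subgraph} (hle : H ≤ H') (s : Set (Sym2 V)) :
    H.deleteEdges s ≤ H'.deleteEdges s := by
  constructor
  · simpa using hle.1
  · intro a b hab
    rw [Subgraph.deleteEdges_adj] at hab ⊢
    exact ⟨hle.2 hab.1, hab.2⟩

/-- trichotomy for reachability after deleting an edge. -/
lemma reach_del_tri {H : G.Subgraph} {a b : V} {x y : V} (p : H.spanningCoe.Walk x y) :
    (H.deleteEdges {s(a,b)}).spanningCoe.Reachable x y ∨
    ((H.deleteEdges {s(a,b)}).spanningCoe.Reachable x a ∧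
      (H.deleteEdges {s(a,b)}).spanningCoe.Reachable b y) ∨
    ((H.deleteEdges {s(a,b)}).spanningCoe.Reachable x b ∧
      (H.deleteEdges {s(a,b)}).spanningCoe.Reachable a y) := by
  induction p with
  | nil => exact Or.inl (Reachable.refl _)
  | @cons u z w h q ih =>
    have hadj : H.Adj u z := h
    by_cases hez : s(u, z) = s(a, b)
    · rw [Sym2.eq_iff] at hez
      rcases hez with ⟨rfl, rfl⟩ | ⟨rfl, rfl⟩
      · -- u = a, z = b
        rcases ih with h1 | ⟨h1, h2⟩ | ⟨h1, h2⟩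
        · exact Or.inr (Or.inl ⟨Reachable.refl _, h1⟩)
        · exact Or.inr (Or.inl ⟨Reachable.refl _, h2⟩)
        · exact Or.inl h2
      · -- u = b, z = a
        rcases ih with h1 | ⟨h1, h2⟩ | ⟨h1, h2⟩
        · exact Or.inr (Or.inr ⟨Reachable.refl _, h1⟩)
        · exact Or.inl h2
        · exact Or.inr (Or.inr ⟨Reachable.refl _, h2⟩)
    · have hadj' : (H.deleteEdges {s(a,b)}).spanningCoe.Adj u z := by
        simp only [Subgraph.spanningCoe_adj, Subgraph.deleteEdges_adj, Set.mem_singleton_iff]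
        exact ⟨hadj, hez⟩
      rcases ih with h1 | ⟨h1, h2⟩ | ⟨h1, h2⟩
      · exact Or.inl (hadj'.reachable.trans h1)
      · exact Or.inr (Or.inl ⟨hadj'.reachable.trans h1, h2⟩)
      · exact Or.inr (Or.inr ⟨hadj'.reachable.trans h1, h2⟩)

lemma coe_del_single {H : G.Subgraph} {a b : V} (ha : a ∈ H.verts) (hb : b ∈ H.verts) :
    (H.deleteEdges {s(a,b)}).coe = H.coe.deleteEdges {s(⟨a, ha⟩, ⟨b, hb⟩)} := by
  rw [Subgraph.coe_deleteEdges_eq]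
  congr 1
  ext e
  induction e with
  | _ x y =>
    rcases x with ⟨x, hx⟩
    rcases y with ⟨y, hy⟩
    simp only [Set.mem_preimage, Sym2.map_pair_eq, Set.mem_singleton_iff, Sym2.eq_iff,
      Subtype.mk.injEq]

/-- Deleting an edge lying on a path of an acyclic subgraph disconnects the path's endpoints
(at the spanning level). -/
lemma path_del_edge {H : G.Subgraph} (hA : H.coe.IsAcyclic) {a b : H.verts}
    (p : H.coe.Walk a b) (hp : p.IsPath) {x y : H.verts} (he : s(x, y) ∈ p.edges) :
    ¬ (H.deleteEdges {s(x.1, y.1)}).spanningCoe.Reachable a.1 b.1 := by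
  intro hr
  classical
  obtain ⟨q0⟩ := hr
  have ha' : a.1 ∈ (H.deleteEdges {s(x.1, y.1)}).verts := by
    rw [Subgraph.deleteEdges_verts]; exact a.2
  obtain ⟨hb', hq⟩ := reach_coe_of_spanning q0 ha'
  rw [coe_del_single x.2 y.2] at hq
  have hea : (⟨a.1, ha'⟩ : H.verts) = a := Subtype.ext rfl
  have heb : (⟨b.1, hb'⟩ : H.verts) = b := Subtype.ext rfl
  replace hq : (H.coe.deleteEdges {s(x, y)}).Reachable a b := hq
  obtain ⟨q⟩ := hq
  set eh : Sym2 H.verts := s(x, y) with hehdef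
  have hq'path : (q.toPath : (H.coe.deleteEdges {eh}).Walk a b).IsPath := q.toPath.2
  have hsub : ∀ f ∈ (q.toPath : (H.coe.deleteEdges {eh}).Walk a b).edges,
      f ∈ H.coe.edgeSet := by
    intro f hf
    have := Walk.edges_subset_edgeSet _ hf
    rw [edgeSet_deleteEdges] at this
    exact this.1
  have hnotmem : eh ∉ (q.toPath : (H.coe.deleteEdges {eh}).Walk a b).edges := by
    intro hf
    have := Walk.edges_subset_edgeSet _ hf
    rw [edgeSet_deleteEdges] at this
    exact this.2 rfl
  set q'' : H.coe.Walk a b := Walk.transfer _ H.coe hsub with hq''def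
  have hq''path : q''.IsPath := Walk.IsPath.transfer _ hq'path
  have hq''edges : q''.edges = (q.toPath : (H.coe.deleteEdges {eh}).Walk a b).edges :=
    Walk.edges_transfer _ _
  have huniq : q'' = p := by
    have := hA.path_unique ⟨q'', hq''path⟩ ⟨p, hp⟩
    exact congrArg Subtype.val this
  apply hnotmem
  rw [← hq''edges, huniq]
  exact he


/-- an edge of an acyclic subgraph is a bridge (spanning level). -/
lemma acyclic_bridge {H : G.Subgraph} (hA : H.coe.IsAcyclic) {a b : V} (hab : H.Adj a b) :
    ¬ (H.deleteEdges {s(a, b)}).spanningCoe.Reachable a b := by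
  have hadj : H.coe.Adj ⟨a, hab.fst_mem⟩ ⟨b, hab.snd_mem⟩ := hab
  have hp : (Walk.cons hadj Walk.nil).IsPath := by
    simp [Walk.isPath_def, hadj.ne]
  exact path_del_edge hA (x := ⟨a, hab.fst_mem⟩) (y := ⟨b, hab.snd_mem⟩)
    (Walk.cons hadj Walk.nil) hp (by simp)

/-- first edge of a path from `w` towards `u` in a tree subgraph:
deleting it disconnects `w` from `u`. -/
lemma first_edge {H : G.Subgraph} (hT : H.coe.IsTree) {w u : V} (hne : w ≠ u)
    (hw : w ∈ H.verts) (hu : u ∈ H.verts) :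
    ∃ z, H.Adj w z ∧ ¬ (H.deleteEdges {s(w, z)}).spanningCoe.Reachable w u := by
  classical
  obtain ⟨p0⟩ := hT.isConnected ⟨w, hw⟩ ⟨u, hu⟩
  have hne' : (⟨w, hw⟩ : H.verts) ≠ ⟨u, hu⟩ := by
    intro h; exact hne (congrArg Subtype.val h)
  obtain ⟨z, hadj, p', hp'⟩ := Walk.exists_eq_cons_of_ne hne' p0.toPath.val
  refine ⟨z.1, hadj, ?_⟩
  have hmem : s((⟨w, hw⟩ : H.verts), z) ∈ p0.toPath.val.edges := by
    rw [hp']; simp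
  exact path_del_edge hT.IsAcyclic (x := ⟨w, hw⟩) (y := z) p0.toPath.val p0.toPath.2 hmem

/-- reachability from a vertex with no incident edges. -/
lemma reach_isolated {G' : SimpleGraph V} {w x : V} (h : ∀ y, ¬ G'.Adj w y)
    (hr : G'.Reachable w x) : w = x := by
  obtain ⟨p⟩ := hr
  cases p with
  | nil => rfl
  | cons h' q => exact absurd h' (h _)

/-- coe-connectivity from spanning reachability out of a root. -/
lemma conn_coe_of_spanning_reach {H : G.Subgraph} {v : V} (hv : v ∈ H.verts)
    (h : ∀ x ∈ H.verts, H.spanningCoe.Reachable v x) : H.coe.Connected := by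
  rw [connected_iff_exists_forall_reachable]
  refine ⟨⟨v, hv⟩, ?_⟩
  rintro ⟨x, hx⟩
  obtain ⟨p⟩ := h x hx
  obtain ⟨hy, hr⟩ := reach_coe_of_spanning p hv
  exact hr

/-- acyclicity of the coe from spanning-level bridges. -/
lemma coe_acyclic_of_bridges {H : G.Subgraph}
    (h : ∀ a b, H.Adj a b → ¬ (H.deleteEdges {s(a, b)}).spanningCoe.Reachable a b) :
    H.coe.IsAcyclic := by
  rw [isAcyclic_iff_forall_adj_isBridge]
  rintro ⟨a, ha⟩ ⟨b, hb⟩ hadj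
  rw [isBridge_iff]
  intro hreach
  have hreach' : (H.coe.deleteEdges {s(⟨a, ha⟩, ⟨b, hb⟩)}).Reachable ⟨a, ha⟩ ⟨b, hb⟩ := hreach
  rw [← coe_del_single ha hb] at hreach'
  exact h a b hadj (reach_spanning_of_coe hreach')

/-- spanning-level bridge property from coe acyclicity, restated . -/
lemma acyclic_of_le {H H' : G.Subgraph} (hle : H' ≤ H) (hA : H.coe.IsAcyclic) :
    H'.coe.IsAcyclic := by
  apply coe_acyclic_of_bridges
  intro a b hab hr
  exact acyclic_bridge hA (hle.2 hab)
    (spanning_reach_mono (deleteEdges_le_of_le hle _) hr)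

/-- a walk leaving a set `S` whose only exit point is `v` must pass through `v`. -/
lemma exit_through {G' : SimpleGraph V} {S : Set V} {v : V}
    (hexit : ∀ u u', G'.Adj u u' → u ∈ S → u ≠ v → u' ∈ S) {z y : V}
    (p : G'.Walk z y) (hz : z ∈ S) (hy : y ∉ S) : v ∈ p.support := by
  induction p with
  | nil => exact absurd hz hy
  | @cons c d e h q ih =>
    by_cases hcv : c = v
    · subst hcv; exact Walk.start_mem_support _
    · have hd : d ∈ S := hexit c d h hz hcv
      rw [Walk.support_cons]
      exact List.mem_cons_of_mem _ (ih hd hy)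

lemma glue_localize_aux {ι : Type*} {v : V} {F : ι → G.Subgraph} {H : G.Subgraph}
    (hmeet : ∀ i j, i ≠ j → (F i).verts ∩ (F j).verts ⊆ {v})
    (hvF : ∀ i, v ∈ (F i).verts)
    (hadj : ∀ x y, H.Adj x y → ∃ i, (F i).Adj x y)
    (s : Set (Sym2 V)) :
    ∀ (n : ℕ) {i : ι} {x y : V}, x ∈ (F i).verts → y ∈ (F i).verts →
      ∀ p : (H.deleteEdges s).spanningCoe.Walk x y, p.length ≤ n →
      ((F i).deleteEdges s).spanningCoe.Reachable x y := by
  classical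
  intro n
  induction n with
  | zero =>
    intro i x y hx hy p hl
    cases p with
    | nil => exact Reachable.refl _
    | cons h q => simp at hl
  | succ n ih =>
    intro i x y hx hy p hl
    cases p with
    | nil => exact Reachable.refl _
    | @cons _ z _ h q =>
      have h' : H.Adj x z ∧ s(x, z) ∉ s := (Subgraph.deleteEdges_adj _ _ _).1 h
      obtain ⟨j, hj⟩ := hadj x z h'.1
      have hl' : q.length ≤ n := by
        rw [Walk.length_cons] at hl; omega
      by_cases hij : j = i
      · subst hij
        have hz : z ∈ (F j).verts := hj.snd_mem
        have hq := ih hz hy q hl'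
        have hadj2 : ((F j).deleteEdges s).spanningCoe.Adj x z := by
          simp only [Subgraph.spanningCoe_adj, Subgraph.deleteEdges_adj]
          exact ⟨hj, h'.2⟩
        exact hadj2.reachable.trans hq
      · have hxv : x = v := hmeet j i hij ⟨hj.fst_mem, hx⟩
        by_cases hyj : y ∈ (F j).verts
        · have hyv : y = v := hmeet j i hij ⟨hyj, hy⟩
          rw [hxv, hyv]
        · have hexit : ∀ u u', (H.deleteEdges s).spanningCoe.Adj u u' →
              u ∈ (F j).verts → u ≠ v → u' ∈ (F j).verts := by
            intro u u' huu' hu hunv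
            obtain ⟨k, hk⟩ := hadj u u' ((Subgraph.deleteEdges_adj _ _ _).1 huu').1
            by_cases hkj : k = j
            · subst hkj; exact hk.snd_mem
            · exact absurd (hmeet k j hkj ⟨hk.fst_mem, hu⟩) hunv
          have hvmem : v ∈ q.support := exit_through hexit q hj.snd_mem hyj
          have hlen : (q.dropUntil v hvmem).length ≤ n :=
            le_trans (Walk.length_dropUntil_le q hvmem) hl'
          have := ih (hvF i) hy (q.dropUntil v hvmem) hlen
          rw [hxv]; exact this

lemma glue_localize {ι : Type*} {v : V} {F : ι → G.Subgraph} {H : G.Subgraph}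
    (hmeet : ∀ i j, i ≠ j → (F i).verts ∩ (F j).verts ⊆ {v})
    (hvF : ∀ i, v ∈ (F i).verts)
    (hadj : ∀ x y, H.Adj x y → ∃ i, (F i).Adj x y)
    (s : Set (Sym2 V)) {i : ι} {x y : V}
    (hx : x ∈ (F i).verts) (hy : y ∈ (F i).verts)
    (h : (H.deleteEdges s).spanningCoe.Reachable x y) :
    ((F i).deleteEdges s).spanningCoe.Reachable x y := by
  obtain ⟨p⟩ := h
  exact glue_localize_aux hmeet hvF hadj s p.length hx hy p le_rfl

lemma deleteEdges_eq_self {H' : G.Subgraph} {e : Sym2 V} (h : e ∉ H'.edgeSet) :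
    H'.deleteEdges {e} = H' := by
  apply Subgraph.ext (Subgraph.deleteEdges_verts _)
  funext x y
  apply propext
  rw [Subgraph.deleteEdges_adj]
  constructor
  · exact fun h' => h'.1
  · intro h'
    refine ⟨h', ?_⟩
    intro hmem
    rw [Set.mem_singleton_iff] at hmem
    apply h
    rw [← hmem]
    exact h'

lemma F_le_glue {ι : Type*} {v : V} {F : ι → G.Subgraph} {H : G.Subgraph}
    (hadjd : ∀ x y, H.Adj x y ↔ ∃ i, (F i).Adj x y)
    (hverts : H.verts = insert v (⋃ i, (F i).verts)) (j : ι) : F j ≤ H := by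
  constructor
  · rw [hverts]
    exact (Set.subset_iUnion (fun i => (F i).verts) j).trans (Set.subset_insert _ _)
  · intro a b hab
    exact (hadjd a b).2 ⟨j, hab⟩

lemma glue_treeOut {ι : Type*} {v : V} {F : ι → G.Subgraph} {H : G.Subgraph}
    (hmeet : ∀ i j, i ≠ j → (F i).verts ∩ (F j).verts ⊆ {v})
    (hvF : ∀ i, v ∈ (F i).verts)
    (hadjd : ∀ x y, H.Adj x y ↔ ∃ i, (F i).Adj x y)
    (hverts : H.verts = insert v (⋃ i, (F i).verts))
    (hconn : ∀ j, ∀ x ∈ (F j).verts, (F j).spanningCoe.Reachable v x)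
    {i : ι} {a b : V} (hab : (F i).Adj a b) :
    treeOut G H v s(a, b) = treeOut G (F i) v s(a, b) := by
  have hFle : ∀ j, F j ≤ H := F_le_glue hadjd hverts
  ext x
  constructor
  · rintro ⟨hxH, hnr⟩
    rw [hverts] at hxH
    rcases hxH with rfl | hxU
    · exact absurd (Reachable.refl _) hnr
    · rw [Set.mem_iUnion] at hxU
      obtain ⟨j, hxj⟩ := hxU
      by_cases hij : j = i
      · subst hij
        exact ⟨hxj, fun hr =>
          hnr (spanning_reach_mono (deleteEdges_le_of_le (hFle j) _) hr)⟩
      · exfalso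
        apply hnr
        have hFj : (F j).deleteEdges {s(a, b)} = F j := by
          apply deleteEdges_eq_self
          intro hmem
          rw [Subgraph.mem_edgeSet] at hmem
          have hav : a = v := hmeet j i hij ⟨hmem.fst_mem, hab.fst_mem⟩
          have hbv : b = v := hmeet j i hij ⟨hmem.snd_mem, hab.snd_mem⟩
          exact hab.ne (hav.trans hbv.symm)
        have := hconn j x hxj
        rw [← hFj] at this
        exact spanning_reach_mono (deleteEdges_le_of_le (hFle j) _) this
  · rintro ⟨hxF, hnr⟩
    refine ⟨(hFle i).1 hxF, fun hr => hnr ?_⟩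
    exact glue_localize hmeet hvF (fun x y h => (hadjd x y).1 h) _ (hvF i) hxF hr

lemma glue_conn {ι : Type*} {v : V} {F : ι → G.Subgraph} {H : G.Subgraph}
    (hadjd : ∀ x y, H.Adj x y ↔ ∃ i, (F i).Adj x y)
    (hverts : H.verts = insert v (⋃ i, (F i).verts))
    (hconn : ∀ j, ∀ x ∈ (F j).verts, (F j).spanningCoe.Reachable v x) :
    H.coe.Connected := by
  have hFle : ∀ j, F j ≤ H := F_le_glue hadjd hverts
  have hvH : v ∈ H.verts := by rw [hverts]; exact Set.mem_insert _ _
  apply conn_coe_of_spanning_reach hvH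
  intro x hx
  rw [hverts] at hx
  rcases hx with rfl | hxU
  · exact Reachable.refl _
  · rw [Set.mem_iUnion] at hxU
    obtain ⟨j, hxj⟩ := hxU
    exact spanning_reach_mono (hFle j) (hconn j x hxj)

lemma glue_acyclic {ι : Type*} {v : V} {F : ι → G.Subgraph} {H : G.Subgraph}
    (hmeet : ∀ i j, i ≠ j → (F i).verts ∩ (F j).verts ⊆ {v})
    (hvF : ∀ i, v ∈ (F i).verts)
    (hadjd : ∀ x y, H.Adj x y ↔ ∃ i, (F i).Adj x y)
    (hacyc : ∀ i, (F i).coe.IsAcyclic) : H.coe.IsAcyclic := by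
  apply coe_acyclic_of_bridges
  intro a b hab hr
  obtain ⟨i, hi⟩ := (hadjd a b).1 hab
  exact acyclic_bridge (hacyc i) hi
    (glue_localize hmeet hvF (fun x y h => (hadjd x y).1 h) _ hi.fst_mem hi.snd_mem hr)

lemma treeOut_root_shift {H : G.Subgraph} {e : Sym2 V} {w w' : V}
    (h : (H.deleteEdges {e}).spanningCoe.Reachable w w') :
    treeOut G H w e = treeOut G H w' e := by
  ext x
  exact ⟨fun ⟨hx, hn⟩ => ⟨hx, fun hr => hn (h.trans hr)⟩,
    fun ⟨hx, hn⟩ => ⟨hx, fun hr => hn (h.symm.trans hr)⟩⟩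

lemma treeOut_isKCut {K : ℕ} {Z : Set V} (hZnu : Z ≠ Set.univ) {H : G.Subgraph} {w : V}
    {e : Sym2 V} (hsafe : SafeTree G K H w) (he : e ∈ H.edgeSet)
    (hsub : treeOut G H w e ⊆ Z) (hne : (treeOut G H w e).Nonempty) :
    IsKCut G K (treeOut G H w e) := by
  refine ⟨hne, ?_, hsafe e he⟩
  intro h
  rw [h] at hsub
  exact hZnu (Set.univ_subset_iff.1 hsub)

lemma endpoint_mem_treeOut {H : G.Subgraph} (hT : H.coe.IsTree) {w a b : V}
    (hw : w ∈ H.verts) (hab : H.Adj a b) :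
    a ∈ treeOut G H w s(a, b) ∨ b ∈ treeOut G H w s(a, b) := by
  have hra : H.spanningCoe.Reachable w a :=
    reach_spanning_of_coe (hT.isConnected ⟨w, hw⟩ ⟨a, hab.fst_mem⟩)
  obtain ⟨p⟩ := hra
  rcases reach_del_tri (a := a) (b := b) p with h1 | ⟨h1, h2⟩ | ⟨h1, h2⟩
  · exact Or.inr ⟨hab.snd_mem, fun hr => acyclic_bridge hT.IsAcyclic hab (h1.symm.trans hr)⟩
  · exact Or.inr ⟨hab.snd_mem, fun hr => acyclic_bridge hT.IsAcyclic hab (h1.symm.trans hr)⟩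
  · exact Or.inl ⟨hab.fst_mem, fun hr => acyclic_bridge hT.IsAcyclic hab (hr.symm.trans h1)⟩

lemma hub_v_decomp {K : ℕ} {Z : Set V} (hZ : IsKCut G K Z)
    {v : V} (hvZ : v ∈ Z) {t : ℕ} {Zs : Fin t → Set V}
    (hdisj : ∀ i j, i ≠ j → Disjoint (Zs i) (Zs j))
    (hvnot : ∀ i, v ∉ Zs i)
    (hunion : Z = {v} ∪ ⋃ i, Zs i)
    (hvcuts : ∀ i, v ∈ cutVerts G (Zs i))
    (hlam : ∀ X : Set V, IsKCut G K X → X ⊂ Z → ∃ i, X ⊆ Zs i)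
    (hv : IsHub G K Z v) : ∀ i, IsHub G K (Zs i) v := by
  obtain ⟨hvcut, H, hHv, hHtree, hHsafe⟩ := hv
  have hHverts : H.verts = Z := by
    rw [hHv]; simp only [Set.union_singleton, Set.insert_eq_self]; exact hvZ
  have hvH : v ∈ H.verts := hHverts ▸ hvZ
  have hmemZ : ∀ x ∈ Z, x = v ∨ ∃ i, x ∈ Zs i := by
    intro x hx; rw [hunion] at hx
    simpa using hx
  -- edge coherence
  have CE : ∀ a b, H.Adj a b → a ≠ v → b ≠ v → ∃ i, a ∈ Zs i ∧ b ∈ Zs i := by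
    intro a b hab hav hbv
    have haZ : a ∈ Z := hHverts ▸ hab.fst_mem
    have hbZ : b ∈ Z := hHverts ▸ hab.snd_mem
    obtain ⟨i0, hai⟩ := (hmemZ a haZ).resolve_left hav
    obtain ⟨j0, hbj⟩ := (hmemZ b hbZ).resolve_left hbv
    by_cases hij : i0 = j0
    · exact ⟨i0, hai, hij ▸ hbj⟩
    · exfalso
      obtain ⟨z, hz, hnr⟩ := first_edge hHtree (Ne.symm hav) hvH (hHverts.symm ▸ haZ)
      have haX : a ∈ treeOut G H v s(v, z) := ⟨hHverts.symm ▸ haZ, hnr⟩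
      have hbX : b ∈ treeOut G H v s(v, z) := by
        refine ⟨hHverts.symm ▸ hbZ, fun hr => hnr ?_⟩
        have hadjba : (H.deleteEdges {s(v, z)}).spanningCoe.Adj b a := by
          simp only [Subgraph.spanningCoe_adj, Subgraph.deleteEdges_adj, Set.mem_singleton_iff]
          refine ⟨hab.symm, fun hcon => ?_⟩
          rw [Sym2.eq_iff] at hcon
          rcases hcon with ⟨rfl, rfl⟩ | ⟨rfl, rfl⟩
          · exact hbv rfl
          · exact hav rfl
        exact hr.trans hadjba.reachable
      have hXsub : treeOut G H v s(v, z) ⊆ Z := fun x hx => hHverts ▸ hx.1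
      have hXcut : IsKCut G K (treeOut G H v s(v, z)) :=
        treeOut_isKCut hZ.2.1 hHsafe (Subgraph.mem_edgeSet.2 hz) hXsub ⟨a, haX⟩
      have hXss : treeOut G H v s(v, z) ⊂ Z :=
        ⟨hXsub, fun hsub => (hsub hvZ).2 (Reachable.refl _)⟩
      obtain ⟨k, hk⟩ := hlam _ hXcut hXss
      have hki : k = i0 := by
        by_contra hne'
        exact Set.disjoint_left.mp (hdisj k i0 hne') (hk haX) hai
      have hkj : k = j0 := by
        by_contra hne'
        exact Set.disjoint_left.mp (hdisj k j0 hne') (hk hbX) hbj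
      exact hij (hki ▸ hkj)
  set F : Fin t → G.Subgraph := fun i => H.induce (Zs i ∪ {v}) with hF
  have hFverts : ∀ i, (F i).verts = Zs i ∪ {v} := fun i => rfl
  have hvF : ∀ i, v ∈ (F i).verts := fun i => Set.mem_union_right _ rfl
  have hmeet : ∀ i j, i ≠ j → (F i).verts ∩ (F j).verts ⊆ {v} := by
    intro i j hij x ⟨hxi, hxj⟩
    rcases hxi with hxi | hxi
    · rcases hxj with hxj | hxj
      · exact absurd hxj (Set.disjoint_left.mp (hdisj i j hij) hxi)
      · exact hxj
    · exact hxi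
  have hadjd : ∀ x y, H.Adj x y ↔ ∃ i, (F i).Adj x y := by
    intro x y
    constructor
    · intro hxy
      by_cases hxv : x = v
      · subst hxv
        have hyZ : y ∈ Z := hHverts ▸ hxy.snd_mem
        obtain ⟨i, hyi⟩ := (hmemZ y hyZ).resolve_left (Ne.symm hxy.ne)
        exact ⟨i, Set.mem_union_right _ rfl, Set.mem_union_left _ hyi, hxy⟩
      · by_cases hyv : y = v
        · subst hyv
          have hxZ : x ∈ Z := hHverts ▸ hxy.fst_mem
          obtain ⟨i, hxi⟩ := (hmemZ x hxZ).resolve_left hxv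
          exact ⟨i, Set.mem_union_left _ hxi, Set.mem_union_right _ rfl, hxy⟩
        · obtain ⟨i, hxi, hyi⟩ := CE x y hxy hxv hyv
          exact ⟨i, Set.mem_union_left _ hxi, Set.mem_union_left _ hyi, hxy⟩
    · rintro ⟨i, -, -, hxy⟩
      exact hxy
  have hverts : H.verts = insert v (⋃ i, (F i).verts) := by
    rw [hHverts, hunion]
    ext x
    simp only [Set.mem_union, Set.mem_singleton_iff, Set.mem_iUnion, Set.mem_insert_iff,
      hFverts]
    tauto
  have hconn : ∀ j, ∀ x ∈ (F j).verts, (F j).spanningCoe.Reachable v x := by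
    intro j x hx
    have hxH : x ∈ H.verts := (F_le_glue hadjd hverts j).1 hx
    have h0 : (H.deleteEdges ∅).spanningCoe.Reachable v x := by
      rw [Subgraph.deleteEdges_empty_eq]
      exact reach_spanning_of_coe (hHtree.isConnected ⟨v, hvH⟩ ⟨x, hxH⟩)
    have := glue_localize hmeet hvF (fun x y h => (hadjd x y).1 h) ∅ (hvF j) hx h0
    rwa [Subgraph.deleteEdges_empty_eq] at this
  intro i
  refine ⟨hvcuts i, F i, hFverts i, ⟨conn_coe_of_spanning_reach (hvF i) (hconn i),
    acyclic_of_le (F_le_glue hadjd hverts i) hHtree.IsAcyclic⟩, ?_⟩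
  intro e he
  induction e with
  | _ a b =>
    have hab : (F i).Adj a b := Subgraph.mem_edgeSet.1 he
    rw [← glue_treeOut hmeet hvF hadjd hverts hconn hab]
    exact hHsafe _ (Subgraph.mem_edgeSet.2 ((F_le_glue hadjd hverts i).2 hab))

lemma subgraphOfAdj_coe_acyclic {v w : V} (hvw : G.Adj v w) :
    (G.subgraphOfAdj hvw).coe.IsAcyclic := by
  apply coe_acyclic_of_bridges
  intro a b hab hr
  have hiso : ∀ y, ¬ ((G.subgraphOfAdj hvw).deleteEdges {s(a, b)}).spanningCoe.Adj a y := by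
    intro y hy
    rw [Subgraph.spanningCoe_adj, Subgraph.deleteEdges_adj] at hy
    obtain ⟨hy1, hy2⟩ := hy
    rw [subgraphOfAdj_adj] at hy1
    have hab' : s(v, w) = s(a, b) := hab
    apply hy2
    rw [Set.mem_singleton_iff, ← hy1, hab']
  exact (Subgraph.Adj.ne hab) (reach_isolated hiso hr)

lemma hub_construct {K : ℕ} {Z : Set V} (hZ : IsKCut G K Z)
    {v : V} (hvZ : v ∈ Z) {t : ℕ} {Zs : Fin t → Set V}
    (hdisj : ∀ i j, i ≠ j → Disjoint (Zs i) (Zs j))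
    (hvnot : ∀ i, v ∉ Zs i)
    (hunion : Z = {v} ∪ ⋃ i, Zs i)
    (hvcut : v ∈ cutVerts G Z)
    (hall : ∀ i, IsHub G K (Zs i) v) :
    IsHub G K Z v ∧ ∀ w, G.Adj v w → w ∉ Z → IsHub G K Z w := by
  classical
  have hZsub : ∀ i, Zs i ⊆ Z := by
    intro i x hx
    rw [hunion]
    exact Set.mem_union_right _ (Set.mem_iUnion.2 ⟨i, hx⟩)
  choose Hs hHsV hHsT hHsS using fun i => (hall i).2
  have hHsVsub : ∀ i, (Hs i).verts ⊆ Z := by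
    intro i x hx
    rw [hHsV i] at hx
    rcases hx with hx | hx
    · exact hZsub i hx
    · exact hx ▸ hvZ
  have hvHs : ∀ i, v ∈ (Hs i).verts := by
    intro i; rw [hHsV i]; exact Set.mem_union_right _ rfl
  have hmeetZs : ∀ i j, i ≠ j → (Hs i).verts ∩ (Hs j).verts ⊆ {v} := by
    intro i j hij x ⟨hxi, hxj⟩
    rw [hHsV i] at hxi; rw [hHsV j] at hxj
    rcases hxi with hxi | hxi
    · rcases hxj with hxj | hxj
      · exact absurd hxj (Set.disjoint_left.mp (hdisj i j hij) hxi)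
      · exact hxj
    · exact hxi
  have hconnZs : ∀ j, ∀ x ∈ (Hs j).verts, (Hs j).spanningCoe.Reachable v x := by
    intro j x hx
    exact reach_spanning_of_coe ((hHsT j).isConnected ⟨v, hvHs j⟩ ⟨x, hx⟩)
  -- the glued tree with root v
  set Hv : G.Subgraph := {
    verts := Z
    Adj := fun x y => ∃ i, (Hs i).Adj x y
    adj_sub := by rintro x y ⟨i, h⟩; exact h.adj_sub
    edge_vert := by rintro x y ⟨i, h⟩; exact hHsVsub i h.fst_mem
    symm := ⟨by rintro x y ⟨i, h⟩; exact ⟨i, h.symm⟩⟩ } with hHvdef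
  have hadjv : ∀ x y, Hv.Adj x y ↔ ∃ i, (Hs i).Adj x y := fun x y => Iff.rfl
  have hvertsv : Hv.verts = insert v (⋃ i, (Hs i).verts) := by
    show Z = _
    rw [hunion]
    ext x
    simp only [Set.mem_union, Set.mem_singleton_iff, Set.mem_iUnion, Set.mem_insert_iff,
      hHsV]
    tauto
  have hHvtree : Hv.coe.IsTree :=
    ⟨glue_conn hadjv hvertsv hconnZs,
     glue_acyclic hmeetZs hvHs hadjv (fun i => (hHsT i).IsAcyclic)⟩
  have hHvsafe : SafeTree G K Hv v := by
    intro e he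
    induction e with
    | _ a b =>
      obtain ⟨i, hab⟩ := Subgraph.mem_edgeSet.1 he
      rw [glue_treeOut hmeetZs hvHs hadjv hvertsv hconnZs hab]
      exact hHsS i _ (Subgraph.mem_edgeSet.2 hab)
  have hHvverts' : Hv.verts = Z ∪ {v} := by
    show Z = Z ∪ {v}
    rw [Set.union_singleton, Set.insert_eq_self.2 hvZ]
  have hubv : IsHub G K Z v := ⟨hvcut, Hv, hHvverts', hHvtree, hHvsafe⟩
  refine ⟨hubv, ?_⟩
  intro w hvw hwZ
  have hwv : w ≠ v := fun h => hwZ (h ▸ hvZ)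
  -- glued tree with the pendant edge vw, root w
  set Hw : G.Subgraph := {
    verts := Z ∪ {w}
    Adj := fun x y => s(v, w) = s(x, y) ∨ ∃ i, (Hs i).Adj x y
    adj_sub := by
      rintro x y (h | ⟨i, h⟩)
      · rw [← G.mem_edgeSet, ← h]; exact hvw
      · exact h.adj_sub
    edge_vert := by
      rintro x y (h | ⟨i, h⟩)
      · rw [Sym2.eq_iff] at h
        rcases h with ⟨rfl, rfl⟩ | ⟨rfl, rfl⟩
        · exact Set.mem_union_left _ hvZ
        · exact Set.mem_union_right _ rfl
      · exact Set.mem_union_left _ (hHsVsub i h.fst_mem)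
    symm := ⟨by
      rintro x y (h | ⟨i, h⟩)
      · exact Or.inl (h.trans (Sym2.eq_swap))
      · exact Or.inr ⟨i, h.symm⟩⟩ } with hHwdef
  set F : Option (Fin t) → G.Subgraph :=
    fun o => Option.elim o (G.subgraphOfAdj hvw) (fun i => Hs i) with hFdef
  have hadjw : ∀ x y, Hw.Adj x y ↔ ∃ o, (F o).Adj x y := by
    intro x y
    constructor
    · rintro (h | ⟨i, h⟩)
      · exact ⟨none, h⟩
      · exact ⟨some i, h⟩
    · rintro ⟨o, h⟩
      match o with
      | none => exact Or.inl h
      | some i => exact Or.inr ⟨i, h⟩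
  have hvF : ∀ o, v ∈ (F o).verts := by
    intro o
    match o with
    | none => exact Set.mem_insert _ _
    | some i => exact hvHs i
  have hmeetw : ∀ o o', o ≠ o' → (F o).verts ∩ (F o').verts ⊆ {v} := by
    have hvw_sub : ∀ i, ({v, w} : Set V) ∩ (Hs i).verts ⊆ {v} := by
      intro i x ⟨hx1, hx2⟩
      rcases hx1 with rfl | rfl
      · rfl
      · exact absurd (hHsVsub i hx2) hwZ
    intro o o' hoo'
    match o, o' with
    | none, none => exact absurd rfl hoo'
    | none, some i => exact hvw_sub i
    | some i, none =>
        intro x hx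
        exact hvw_sub i ⟨hx.2, hx.1⟩
    | some i, some j =>
        exact hmeetZs i j (fun h => hoo' (by rw [h]))
  have hFnone : F none = G.subgraphOfAdj hvw := rfl
  have hFsome : ∀ i, F (some i) = Hs i := fun _ => rfl
  have hvertsw : Hw.verts = insert v (⋃ o, (F o).verts) := by
    show Z ∪ {w} = _
    rw [Set.iUnion_option (fun o => (F o).verts), hFnone]
    ext x
    simp only [hFsome, hHsV, subgraphOfAdj_verts, hunion, Set.mem_union, Set.mem_insert_iff,
      Set.mem_singleton_iff, Set.mem_iUnion]
    tauto
  have hconnw : ∀ o, ∀ x ∈ (F o).verts, (F o).spanningCoe.Reachable v x := by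
    intro o x hx
    match o with
    | none =>
        rcases hx with rfl | rfl
        · rfl
        · have : (G.subgraphOfAdj hvw).spanningCoe.Adj v x := by
            show (G.subgraphOfAdj hvw).Adj v x
            exact rfl
          exact this.reachable
    | some i => exact hconnZs i x hx
  have hHwtree : Hw.coe.IsTree := by
    refine ⟨glue_conn hadjw hvertsw hconnw, glue_acyclic hmeetw hvF hadjw ?_⟩
    intro o
    match o with
    | none => exact subgraphOfAdj_coe_acyclic hvw
    | some i => exact (hHsT i).IsAcyclic
  have hHwsafe : SafeTree G K Hw w := by
    intro e he
    induction e with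
    | _ a b =>
      rcases (Subgraph.mem_edgeSet.1 he) with heq | ⟨i, hab⟩
      · -- the pendant edge : treeOut is Z itself
        have htO : treeOut G Hw w s(a, b) = Z := by
          ext x
          constructor
          · rintro ⟨hx1, hx2⟩
            rcases hx1 with hx1 | rfl
            · exact hx1
            · exact absurd (Reachable.refl _) hx2
          · intro hx
            refine ⟨Set.mem_union_left _ hx, fun hr => ?_⟩
            have hiso : ∀ y, ¬ (Hw.deleteEdges {s(a, b)}).spanningCoe.Adj w y := by
              intro y hy
              rw [Subgraph.spanningCoe_adj, Subgraph.deleteEdges_adj] at hy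
              obtain ⟨hy1, hy2⟩ := hy
              rcases hy1 with hy1 | ⟨i, hy1⟩
              · rw [Sym2.eq_iff] at hy1
                rcases hy1 with ⟨rfl, rfl⟩ | ⟨rfl, -⟩
                · exact hwZ hvZ
                · apply hy2
                  rw [Set.mem_singleton_iff, ← heq]
                  exact Sym2.eq_swap
              · exact hwZ (hHsVsub i hy1.fst_mem)
            have := reach_isolated hiso hr
            exact hwZ (this ▸ hx)
        rw [htO]
        exact hZ.2.2
      · -- an edge of one of the branch trees
        have habZ : a ∈ Z ∧ b ∈ Z :=
          ⟨hHsVsub i hab.fst_mem, hHsVsub i hab.snd_mem⟩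
        have hne_vw : s(w, v) ∉ ({s(a, b)} : Set (Sym2 V)) := by
          rw [Set.mem_singleton_iff, Sym2.eq_iff]
          rintro (⟨rfl, rfl⟩ | ⟨rfl, rfl⟩)
          · exact hwZ habZ.1
          · exact hwZ habZ.2
        have hadjwv : (Hw.deleteEdges {s(a, b)}).spanningCoe.Adj w v := by
          rw [Subgraph.spanningCoe_adj, Subgraph.deleteEdges_adj]
          exact ⟨Or.inl Sym2.eq_swap.symm, hne_vw⟩
        rw [treeOut_root_shift hadjwv.reachable,
          glue_treeOut hmeetw hvF hadjw hvertsw hconnw (i := some i) hab]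
        exact hHsS i _ (Subgraph.mem_edgeSet.2 hab)
  have hwcut : w ∈ cutVerts G Z := by
    refine ⟨s(v, w), ⟨hvw, v, w, rfl, hvZ, hwZ⟩, ?_⟩
    rw [Sym2.mem_iff]
    exact Or.inr rfl
  exact ⟨hwcut, Hw, rfl, hHwtree, hHwsafe⟩

lemma hub_locate {K : ℕ} {Z : Set V} (hZ : IsKCut G K Z)
    {v : V} (hvZ : v ∈ Z) {t : ℕ} {Zs : Fin t → Set V}
    (hvnot : ∀ i, v ∉ Zs i)
    (hunion : Z = {v} ∪ ⋃ i, Zs i)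
    (hvcut : v ∈ cutVerts G Z)
    (hlam : ∀ X : Set V, IsKCut G K X → X ⊂ Z → ∃ i, X ⊆ Zs i)
    {w : V} (hw : IsHub G K Z w) (hwv : w ≠ v) :
    w ∉ Z ∧ G.Adj v w ∧ IsHub G K Z v := by
  classical
  obtain ⟨hwcut, H, hHv, hHtree, hHsafe⟩ := hw
  -- Step 1 : w is not inside Z
  have hwZ : w ∉ Z := by
    intro hwZ
    have hHverts : H.verts = Z := by
      rw [hHv, Set.union_singleton, Set.insert_eq_self.2 hwZ]
    have hvH : v ∈ H.verts := hHverts.symm ▸ hvZ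
    have hwH : w ∈ H.verts := hHverts.symm ▸ hwZ
    obtain ⟨z, hz, hnr⟩ := first_edge hHtree hwv hwH hvH
    have hvX : v ∈ treeOut G H w s(w, z) := ⟨hvH, hnr⟩
    have hXsub : treeOut G H w s(w, z) ⊆ Z := fun x hx => hHverts ▸ hx.1
    have hXcut := treeOut_isKCut hZ.2.1 hHsafe (Subgraph.mem_edgeSet.2 hz) hXsub ⟨v, hvX⟩
    have hXss : treeOut G H w s(w, z) ⊂ Z :=
      ⟨hXsub, fun hsub => ((hsub hwZ).2) (Reachable.refl _)⟩
    obtain ⟨k, hk⟩ := hlam _ hXcut hXss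
    exact hvnot k (hk hvX)
  have hvH : v ∈ H.verts := by rw [hHv]; exact Set.mem_union_left _ hvZ
  have hwH : w ∈ H.verts := by rw [hHv]; exact Set.mem_union_right _ rfl
  have hmemZ' : ∀ x ∈ H.verts, x ≠ w → x ∈ Z := by
    intro x hx hxw
    rw [hHv] at hx
    rcases hx with hx | hx
    · exact hx
    · exact absurd hx hxw
  have hXsubZ : ∀ e, treeOut G H w e ⊆ Z := by
    intro e x hx
    refine hmemZ' x hx.1 ?_
    rintro rfl
    exact hx.2 (Reachable.refl _)
  -- Step 2 : first edge towards v
  obtain ⟨u, hu, hnr⟩ := first_edge hHtree hwv hwH hvH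
  have hwu : w ≠ u := hu.ne
  have he : s(w, u) ∈ H.edgeSet := Subgraph.mem_edgeSet.2 hu
  have hvX : v ∈ treeOut G H w s(w, u) := ⟨hvH, hnr⟩
  have hXcut := treeOut_isKCut hZ.2.1 hHsafe he (hXsubZ _) ⟨v, hvX⟩
  have hXZ : treeOut G H w s(w, u) = Z := by
    by_contra hne
    obtain ⟨k, hk⟩ := hlam _ hXcut
      ⟨hXsubZ _, fun hsub => hne (Set.Subset.antisymm (hXsubZ _) hsub)⟩
    exact hvnot k (hk hvX)
  have huZ : u ∈ Z := hmemZ' u hu.snd_mem (Ne.symm hwu)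
  -- Step 3 : w has u as its unique neighbour
  have huniq : ∀ z, H.Adj w z → z = u := by
    intro z hz
    by_contra hzu
    have hzZ : z ∈ Z := hmemZ' z hz.snd_mem (Ne.symm hz.ne)
    have hzX : z ∈ treeOut G H w s(w, u) := by rw [hXZ]; exact hzZ
    apply hzX.2
    have hadjz : (H.deleteEdges {s(w, u)}).spanningCoe.Adj w z := by
      rw [Subgraph.spanningCoe_adj, Subgraph.deleteEdges_adj]
      refine ⟨hz, ?_⟩
      rw [Set.mem_singleton_iff, Sym2.eq_iff]
      rintro (⟨-, h⟩ | ⟨h1, h2⟩)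
      · exact hzu h
      · exact hwu h1
    exact hadjz.reachable
  -- Step 4 : u = v
  have huv : u = v := by
    by_contra huv
    obtain ⟨z2, hz2, hnr2⟩ := first_edge hHtree huv hu.snd_mem hvH
    by_cases hz2w : z2 = w
    · subst z2
      have hnr2' : ¬ (H.deleteEdges {s(w, u)}).spanningCoe.Reachable u v := by
        rw [show s(w, u) = s(u, w) from Sym2.eq_swap.symm]
        exact hnr2
      have hruv : H.spanningCoe.Reachable u v :=
        reach_spanning_of_coe (hHtree.isConnected ⟨u, hu.snd_mem⟩ ⟨v, hvH⟩)
      obtain ⟨p⟩ := hruv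
      rcases reach_del_tri (a := w) (b := u) p with h1 | ⟨h1, h2⟩ | ⟨h1, h2⟩
      · exact hnr2' h1
      · exact hnr2' h2
      · exact hvX.2 h2
    · have hfe : s(u, z2) ≠ s(w, u) := by
        intro hcon
        rw [Sym2.eq_iff] at hcon
        rcases hcon with ⟨h1, -⟩ | ⟨-, h2⟩
        · exact hwu h1.symm
        · exact hz2w h2
      have hRwu : (H.deleteEdges {s(u, z2)}).spanningCoe.Adj w u := by
        rw [Subgraph.spanningCoe_adj, Subgraph.deleteEdges_adj]
        exact ⟨hu, fun h => hfe ((Set.mem_singleton_iff.1 h).symm)⟩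
      have hvY : v ∈ treeOut G H w s(u, z2) :=
        ⟨hvH, fun hr => hnr2 (hRwu.reachable.symm.trans hr)⟩
      have hYcut := treeOut_isKCut hZ.2.1 hHsafe (Subgraph.mem_edgeSet.2 hz2)
        (hXsubZ _) ⟨v, hvY⟩
      have hYss : treeOut G H w s(u, z2) ⊂ Z := by
        refine ⟨hXsubZ _, fun hsub => ?_⟩
        exact (hsub huZ).2 hRwu.reachable
      obtain ⟨k, hk⟩ := hlam _ hYcut hYss
      exact hvnot k (hk hvY)
  obtain rfl := huv.symm
  have hadjvw : G.Adj v w := hu.adj_sub.symm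
  have hHwv : H.Adj v w := hu.symm
  refine ⟨hwZ, hadjvw, ?_⟩
  -- Step 5 : build a hub tree for Z rooted at v by removing w
  set F : Bool → G.Subgraph :=
    fun b => if b then G.subgraphOfAdj hadjvw else H.induce Z with hFdef
  have hFt : F true = G.subgraphOfAdj hadjvw := rfl
  have hFf : F false = H.induce Z := rfl
  have hadjd : ∀ x y, H.Adj x y ↔ ∃ b, (F b).Adj x y := by
    intro x y
    constructor
    · intro hxy
      by_cases hxw : x = w
      · subst hxw
        have := huniq y hxy
        subst this
        exact ⟨true, by rw [hFt, subgraphOfAdj_adj]; exact Sym2.eq_swap.symm⟩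
      · by_cases hyw : y = w
        · subst hyw
          have := huniq x hxy.symm
          subst this
          exact ⟨true, by rw [hFt, subgraphOfAdj_adj]⟩
        · refine ⟨false, ?_⟩
          rw [hFf, Subgraph.induce_adj]
          exact ⟨hmemZ' x hxy.fst_mem hxw, hmemZ' y hxy.snd_mem hyw, hxy⟩
    · rintro ⟨b, hb⟩
      cases b
      · rw [hFf, Subgraph.induce_adj] at hb
        exact hb.2.2
      · rw [hFt, subgraphOfAdj_adj, Sym2.eq_iff] at hb
        rcases hb with ⟨rfl, rfl⟩ | ⟨rfl, rfl⟩
        · exact hHwv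
        · exact hHwv.symm
  have hmeet : ∀ b b', b ≠ b' → (F b).verts ∩ (F b').verts ⊆ {v} := by
    have key : ({v, w} : Set V) ∩ Z ⊆ {v} := by
      rintro x ⟨hx1, hx2⟩
      rcases hx1 with rfl | rfl
      · rfl
      · exact absurd hx2 hwZ
    intro b b' hbb'
    cases b <;> cases b'
    · exact absurd rfl hbb'
    · rintro x ⟨hx1, hx2⟩
      exact key ⟨hx2, hx1⟩
    · exact key
    · exact absurd rfl hbb'
  have hvF : ∀ b, v ∈ (F b).verts := by
    intro b
    cases b
    · exact hvZ
    · exact Set.mem_insert _ _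
  have hverts : H.verts = insert v (⋃ b, (F b).verts) := by
    rw [hHv]
    ext x
    simp only [Set.mem_union, Set.mem_singleton_iff, Set.mem_insert_iff, Set.mem_iUnion]
    constructor
    · rintro (hx | rfl)
      · exact Or.inr ⟨false, hx⟩
      · exact Or.inr ⟨true, Or.inr rfl⟩
    · rintro (rfl | ⟨b, hb⟩)
      · exact Or.inl hvZ
      · cases b
        · exact Or.inl hb
        · rcases hb with rfl | rfl
          · exact Or.inl hvZ
          · exact Or.inr rfl
  have hconn : ∀ b, ∀ x ∈ (F b).verts, (F b).spanningCoe.Reachable v x := by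
    intro b x hx
    cases b
    · have hxH : x ∈ H.verts := by rw [hHv]; exact Set.mem_union_left _ hx
      have h0 : (H.deleteEdges ∅).spanningCoe.Reachable v x := by
        rw [Subgraph.deleteEdges_empty_eq]
        exact reach_spanning_of_coe (hHtree.isConnected ⟨v, hvH⟩ ⟨x, hxH⟩)
      have := glue_localize hmeet hvF (fun x y h => (hadjd x y).1 h) ∅ (i := false)
        hvZ hx h0
      rwa [Subgraph.deleteEdges_empty_eq] at this
    · rcases hx with rfl | rfl
      · rfl
      · have hadj1 : (G.subgraphOfAdj hadjvw).spanningCoe.Adj v x := by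
          show (G.subgraphOfAdj hadjvw).Adj v x
          exact rfl
        exact hadj1.reachable
  have hH0tree : (H.induce Z).coe.IsTree :=
    ⟨conn_coe_of_spanning_reach hvZ (hconn false),
     acyclic_of_le (F_le_glue hadjd hverts false) hHtree.IsAcyclic⟩
  have hH0safe : SafeTree G K (H.induce Z) v := by
    intro f hf
    induction f with
    | _ a b =>
      have hab : (H.induce Z).Adj a b := Subgraph.mem_edgeSet.1 hf
      have habZ : a ∈ Z ∧ b ∈ Z := by
        rw [Subgraph.induce_adj] at hab
        exact ⟨hab.1, hab.2.1⟩
      have hfe : s(w, v) ∉ ({s(a, b)} : Set (Sym2 V)) := by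
        rw [Set.mem_singleton_iff, Sym2.eq_iff]
        rintro (⟨rfl, -⟩ | ⟨rfl, -⟩)
        · exact hwZ habZ.1
        · exact hwZ habZ.2
      have hRwv : (H.deleteEdges {s(a, b)}).spanningCoe.Adj w v := by
        rw [Subgraph.spanningCoe_adj, Subgraph.deleteEdges_adj]
        exact ⟨hHwv.symm, hfe⟩
      have hstep := glue_treeOut hmeet hvF hadjd hverts hconn (i := false) hab
      rw [hFf] at hstep
      rw [← hstep, ← treeOut_root_shift hRwv.reachable]
      apply hHsafe
      rw [Subgraph.induce_adj] at hab
      exact Subgraph.mem_edgeSet.2 hab.2.2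
  have hH0verts : (H.induce Z).verts = Z ∪ {v} := by
    show Z = Z ∪ {v}
    rw [Set.union_singleton, Set.insert_eq_self.2 hvZ]
  exact ⟨hvcut, H.induce Z, hH0verts, hH0tree, hH0safe⟩

end HubAux

/-- (Hub recurrence for Type-1 internal nodes.) -/
theorem hubs_type1 {V : Type*} [Fintype V] (K : ℕ)
    (G : SimpleGraph V) (hG : KEdgeConnected G K)
    (Z : Set V) (hZ : IsKCut G K Z)
    (v : V) (hvZ : v ∈ Z) (t : ℕ) (Zs : Fin t → Set V)
    (hdisj : ∀ i j, i ≠ j → Disjoint (Zs i) (Zs j))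
    (hne : ∀ i, (Zs i).Nonempty)
    (hvnot : ∀ i, v ∉ Zs i)
    (hunion : Z = {v} ∪ ⋃ i, Zs i)
    (hcuts : ∀ i, IsKCut G K (Zs i))
    (hvcut : v ∈ cutVerts G Z)
    (hvcuts : ∀ i, v ∈ cutVerts G (Zs i))
    (hlam : ∀ X : Set V, IsKCut G K X → X ⊂ Z → ∃ i, X ⊆ Zs i) :
    ((∀ i, v ∈ hubSet G K (Zs i)) →
        hubSet G K Z = {v} ∪ (G.neighborSet v \ Z)) ∧
    (¬ (∀ i, v ∈ hubSet G K (Zs i)) → hubSet G K Z = ∅) := by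
  constructor
  · intro hall
    obtain ⟨hubv, hubw⟩ := HubAux.hub_construct hZ hvZ hdisj hvnot hunion hvcut hall
    ext w
    simp only [hubSet, Set.mem_setOf_eq, Set.mem_union, Set.mem_singleton_iff, Set.mem_diff,
      mem_neighborSet]
    constructor
    · intro hw
      by_cases hwv : w = v
      · exact Or.inl hwv
      · obtain ⟨hwZ, hadj, -⟩ := HubAux.hub_locate hZ hvZ hvnot hunion hvcut hlam hw hwv
        exact Or.inr ⟨hadj, hwZ⟩
    · rintro (rfl | ⟨hadj, hwZ⟩)
      · exact hubv
      · exact hubw w hadj hwZ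
  · intro hnall
    ext w
    simp only [hubSet, Set.mem_setOf_eq, Set.mem_empty_iff_false, iff_false]
    intro hw
    apply hnall
    by_cases hwv : w = v
    · exact HubAux.hub_v_decomp hZ hvZ hdisj hvnot hunion hvcuts hlam (hwv ▸ hw)
    · obtain ⟨-, -, hubv⟩ := HubAux.hub_locate hZ hvZ hvnot hunion hvcut hlam hw hwv
      exact HubAux.hub_v_decomp hZ hvZ hdisj hvnot hunion hvcuts hlam hubv
end

section
/- Let G be a K-edge-connected finite simple graph, let Z ⊆ V(G) be such that ∂Z is a K-cut, and let Z_1, ..., Z_t be pairwise disjoint nonempty sets with Z = Z_1 ∪ ... ∪ Z_t, such that each ∂Z_i is a K-cut and such that every K-cut of G having a shore X with X ⊊ Z satisfies X ⊆ Z_i for some i. Then H̃(Z) = H̄ ∪ (N(H̄ ∩ Z) ∖ Z), where H̄ = V(∂Z) ∩ H̃(Z_1) ∩ ... ∩ H̃(Z_t), and N(S) denotes the set of vertices adjacent in G to some vertex of S. -/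
open SimpleGraph

variable {V : Type*}

section AuxBasic
variable {G : SimpleGraph V}

@[simp] lemma Subgraph_spanningCoe_adj (H : G.Subgraph) (u v : V) :
    H.spanningCoe.Adj u v ↔ H.Adj u v := Iff.rfl

/-- the inclusion hom from the coe of a subgraph to its spanningCoe -/
def sCoeHom (H : G.Subgraph) : H.coe →g H.spanningCoe where
  toFun := Subtype.val
  map_rel' := by intro a b h; exact h

lemma sCoeHom_inj {H : G.Subgraph} : Function.Injective (sCoeHom H) :=
  Subtype.val_injective

/-- every vertex on a walk is reachable from the start -/
lemma walk_reach_support {S : SimpleGraph V} {a x v : V} (p : S.Walk a x)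
    (hv : v ∈ p.support) : S.Reachable a v := by
  induction p generalizing v with
  | nil => rw [SimpleGraph.Walk.support_nil, List.mem_singleton] at hv; subst hv; rfl
  | cons h q ih =>
    rw [SimpleGraph.Walk.support_cons, List.mem_cons] at hv
    rcases hv with hv | hv
    · subst hv; rfl
    · exact (h.reachable).trans (ih hv)

/-- splitting a walk at a (potential) edge deletion -/
lemma walk_split {S : SimpleGraph V} (a b : V) {u x : V} (p : S.Walk u x) :
    (S.deleteEdges {s(a,b)}).Reachable u x ∨
      ((S.deleteEdges {s(a,b)}).Reachable u a ∧ (S.deleteEdges {s(a,b)}).Reachable b x) ∨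
      ((S.deleteEdges {s(a,b)}).Reachable u b ∧ (S.deleteEdges {s(a,b)}).Reachable a x) := by
  induction p with
  | nil => exact Or.inl (Reachable.refl _)
  | @cons u v x h q ih =>
    by_cases he : s(u, v) = s(a, b)
    · rcases Sym2.eq_iff.mp he with ⟨rfl, rfl⟩ | ⟨rfl, rfl⟩
      · rcases ih with hr | ⟨h1, h2⟩ | ⟨h1, h2⟩
        · exact Or.inr (Or.inl ⟨Reachable.refl _, hr⟩)
        · exact Or.inl (h1.symm.trans h2)
        · exact Or.inl h2
      · rcases ih with hr | ⟨h1, h2⟩ | ⟨h1, h2⟩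
        · exact Or.inr (Or.inr ⟨Reachable.refl _, hr⟩)
        · exact Or.inl h2
        · exact Or.inl (h1.symm.trans h2)
    · have hadj : (S.deleteEdges {s(a,b)}).Adj u v := by
        rw [SimpleGraph.deleteEdges_adj]
        exact ⟨h, by simpa using he⟩
      rcases ih with hr | ⟨h1, h2⟩ | ⟨h1, h2⟩
      · exact Or.inl (hadj.reachable.trans hr)
      · exact Or.inr (Or.inl ⟨hadj.reachable.trans h1, h2⟩)
      · exact Or.inr (Or.inr ⟨hadj.reachable.trans h1, h2⟩)

/-- lifting a spanningCoe walk into the coe graph -/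
lemma spanning_walk_lift {H : G.Subgraph} {x y : V} (p : H.spanningCoe.Walk x y)
    (hx : x ∈ H.verts) :
    ∃ hy : y ∈ H.verts, ∃ q : H.coe.Walk ⟨x, hx⟩ ⟨y, hy⟩,
      q.map (sCoeHom H) = p := by
  induction p with
  | nil => exact ⟨hx, SimpleGraph.Walk.nil, rfl⟩
  | @cons u v x h q ih =>
    have hv : v ∈ H.verts := (Subgraph.Adj.snd_mem h)
    obtain ⟨hy, q', hq'⟩ := ih hv
    refine ⟨hy, SimpleGraph.Walk.cons (by exact h : H.coe.Adj ⟨u, hx⟩ ⟨v, hv⟩) q', ?_⟩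
    subst hq'; rfl

/-- a spanningCoe walk starting in the vertex set stays in the vertex set -/
lemma spanning_walk_mem_verts {H : G.Subgraph} {x y v : V} (p : H.spanningCoe.Walk x y)
    (hx : x ∈ H.verts) (hv : v ∈ p.support) : v ∈ H.verts := by
  induction p generalizing v with
  | nil => rw [SimpleGraph.Walk.support_nil, List.mem_singleton] at hv; subst hv; exact hx
  | cons h q ih =>
    rw [SimpleGraph.Walk.support_cons, List.mem_cons] at hv
    rcases hv with hv | hv
    · subst hv; exact hx
    · exact ih (Subgraph.Adj.snd_mem h) hv

lemma spanning_reach_end_mem_verts {H : G.Subgraph} {x y : V}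
    (h : H.spanningCoe.Reachable x y) (hx : x ∈ H.verts) : y ∈ H.verts := by
  obtain ⟨p⟩ := h
  exact spanning_walk_mem_verts p hx (SimpleGraph.Walk.end_mem_support p)

lemma spanning_reach_of_coe {H : G.Subgraph} {x y : H.verts}
    (h : H.coe.Reachable x y) : H.spanningCoe.Reachable (x : V) (y : V) :=
  h.map (sCoeHom H)

lemma coe_reach_of_spanning {H : G.Subgraph} {x y : V} (hx : x ∈ H.verts)
    (h : H.spanningCoe.Reachable x y) :
    ∃ hy : y ∈ H.verts, H.coe.Reachable ⟨x, hx⟩ ⟨y, hy⟩ := by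
  obtain ⟨p⟩ := h
  obtain ⟨hy, q, -⟩ := spanning_walk_lift p hx
  exact ⟨hy, ⟨q⟩⟩

/-- acyclicity transfers from coe to spanningCoe -/
lemma spanning_acyclic_of_coe {H : G.Subgraph} (h : H.coe.IsAcyclic) :
    H.spanningCoe.IsAcyclic := by
  intro v c hc
  cases c with
  | nil => simpa using hc.three_le_length
  | cons hadj q =>
    have hv : v ∈ H.verts := Subgraph.Adj.fst_mem hadj
    obtain ⟨hy, q', hq'⟩ := spanning_walk_lift (SimpleGraph.Walk.cons hadj q) hv
    have : q'.IsCycle := by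
      rw [← SimpleGraph.Walk.map_isCycle_iff_of_injective sCoeHom_inj, hq']
      exact hc
    exact h q' this

lemma coe_acyclic_of_spanning {H : G.Subgraph} (h : H.spanningCoe.IsAcyclic) :
    H.coe.IsAcyclic := by
  intro v c hc
  exact h (c.map (sCoeHom H)) (hc.map sCoeHom_inj)

end AuxBasic

section TreeOut

variable {V : Type*} {G : SimpleGraph V}

lemma mem_treeOut {H : G.Subgraph} {w : V} {e : Sym2 V} {x : V} :
    x ∈ treeOut G H w e ↔
      x ∈ H.verts ∧ ¬ (H.deleteEdges {e}).spanningCoe.Reachable w x := Iff.rfl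

lemma spanning_del (H : G.Subgraph) (s : Set (Sym2 V)) :
    (H.deleteEdges s).spanningCoe = H.spanningCoe.deleteEdges s := by
  rw [Subgraph.deleteEdges_spanningCoe_eq]

/-- in a connected subgraph every vertex is spanningCoe-reachable from any root -/
lemma tree_reach_all {H : G.Subgraph} (hconn : H.coe.Connected) {w x : V}
    (hw : w ∈ H.verts) (hx : x ∈ H.verts) : H.spanningCoe.Reachable w x :=
  spanning_reach_of_coe (hconn.preconnected ⟨w, hw⟩ ⟨x, hx⟩)

/-- deleting a tree edge disconnects its endpoints -/
lemma tree_bridge {H : G.Subgraph} (hac : H.coe.IsAcyclic) {a b : V} (hab : H.Adj a b) :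
    ¬ (H.deleteEdges {s(a,b)}).spanningCoe.Reachable a b := by
  rw [spanning_del]
  have hsac : H.spanningCoe.IsAcyclic := spanning_acyclic_of_coe hac
  have hbr := (isAcyclic_iff_forall_adj_isBridge.mp hsac)
    (show H.spanningCoe.Adj a b from hab)
  rw [isBridge_iff] at hbr
  exact hbr

/-- root is never in treeOut -/
lemma root_not_mem_treeOut {H : G.Subgraph} {w : V} {e : Sym2 V} :
    w ∉ treeOut G H w e := fun h => h.2 (Reachable.refl w)

/-- at least one endpoint of a deleted edge is still reachable from the root -/
lemma near_endpoint {H : G.Subgraph} (hconn : H.coe.Connected) {w a b : V}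
    (hw : w ∈ H.verts) (hab : H.Adj a b) :
    a ∉ treeOut G H w s(a,b) ∨ b ∉ treeOut G H w s(a,b) := by
  by_contra hcon
  push_neg at hcon
  obtain ⟨ha, hb⟩ := hcon
  obtain ⟨p⟩ := tree_reach_all hconn hw hab.fst_mem
  rcases walk_split a b p with hr | ⟨h1, h2⟩ | ⟨h1, h2⟩ <;>
    rw [← spanning_del] at *
  · exact ha.2 hr
  · exact ha.2 h1
  · exact hb.2 h1

/-- if one endpoint is reachable, the other is in treeOut -/
lemma far_endpoint {H : G.Subgraph} (hac : H.coe.IsAcyclic) {w a b : V}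
    (hw : w ∈ H.verts)
    (hab : H.Adj a b) (ha : a ∉ treeOut G H w s(a,b)) : b ∈ treeOut G H w s(a,b) := by
  have hav : a ∈ H.verts := hab.fst_mem
  have hra : (H.deleteEdges {s(a,b)}).spanningCoe.Reachable w a := by
    by_contra hh; exact ha ⟨hav, hh⟩
  refine ⟨hab.snd_mem, fun hrb => ?_⟩
  exact tree_bridge hac hab (hra.symm.trans hrb)

/-- the far endpoint is in treeOut (existence form) -/
lemma exists_far {H : G.Subgraph} (htree : H.coe.IsTree) {w a b : V}
    (hw : w ∈ H.verts) (hab : H.Adj a b) :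
    (a ∈ treeOut G H w s(a,b) ∧ b ∉ treeOut G H w s(a,b)) ∨
      (b ∈ treeOut G H w s(a,b) ∧ a ∉ treeOut G H w s(a,b)) := by
  rcases near_endpoint htree.isConnected hw hab with ha | hb
  · exact Or.inr ⟨far_endpoint htree.IsAcyclic hw hab ha, ha⟩
  · have hswap : treeOut G H w s(b,a) = treeOut G H w s(a,b) := by rw [Sym2.eq_swap]
    have hb' : b ∉ treeOut G H w s(b,a) := by rw [hswap]; exact hb
    have : a ∈ treeOut G H w s(b,a) := far_endpoint htree.IsAcyclic hw hab.symm hb'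
    rw [hswap] at this
    exact Or.inl ⟨this, hb⟩

/-- treeOut is exactly the set of vertices reachable from the far endpoint -/
lemma treeOut_eq_far_reach {H : G.Subgraph} (htree : H.coe.IsTree) {w a b : V}
    (hw : w ∈ H.verts) (hab : H.Adj a b) (hb : b ∈ treeOut G H w s(a,b)) {x : V} :
    x ∈ treeOut G H w s(a,b) ↔
      x ∈ H.verts ∧ (H.deleteEdges {s(a,b)}).spanningCoe.Reachable b x := by
  constructor
  · rintro ⟨hxv, hnr⟩
    refine ⟨hxv, ?_⟩
    obtain ⟨p⟩ := tree_reach_all htree.isConnected hw hxv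
    rcases walk_split a b p with hr | ⟨h1, h2⟩ | ⟨h1, h2⟩ <;> rw [← spanning_del] at *
    · exact absurd hr hnr
    · exact h2
    · exact absurd h1 hb.2
  · rintro ⟨hxv, hr⟩
    refine ⟨hxv, fun hwx => hb.2 (hwx.trans hr.symm)⟩

/-- every non-root vertex lies in the branch of some neighbour of the root -/
lemma branch_classify {H : G.Subgraph} (htree : H.coe.IsTree) {r x : V}
    (hr : r ∈ H.verts) (hx : x ∈ H.verts) (hxr : x ≠ r) :
    ∃ c, H.Adj r c ∧ x ∈ treeOut G H r s(r,c) := by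
  classical
  obtain ⟨p0⟩ := tree_reach_all htree.isConnected hr hx
  have hIsPath : (p0.toPath : H.spanningCoe.Walk r x).IsPath := p0.toPath.2
  set p := (p0.toPath : H.spanningCoe.Walk r x) with hp
  clear_value p
  cases p with
  | nil => exact absurd rfl hxr
  | @cons _ c _ h q =>
    rw [SimpleGraph.Walk.cons_isPath_iff] at hIsPath
    refine ⟨c, h, hx, fun hre => ?_⟩
    have hq : ∀ e ∈ q.edges, e ∉ ({s(r,c)} : Set (Sym2 V)) := by
      intro e he hee
      rw [Set.mem_singleton_iff] at hee
      subst hee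
      exact hIsPath.2 (q.fst_mem_support_of_mem_edges he)
    have q' := q.toDeleteEdges {s(r,c)} hq
    rw [spanning_del] at hre
    have hcx : (H.spanningCoe.deleteEdges {s(r,c)}).Reachable c x := ⟨q'⟩
    have hrc : (H.spanningCoe.deleteEdges {s(r,c)}).Reachable r c := hre.trans hcx.symm
    rw [← spanning_del] at hrc
    exact tree_bridge htree.IsAcyclic h hrc

/-- changing root within the same component does not change treeOut -/
lemma treeOut_root_transfer {H : G.Subgraph} {w r : V} {e : Sym2 V}
    (hwr : (H.deleteEdges {e}).spanningCoe.Reachable w r) :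
    treeOut G H r e = treeOut G H w e := by
  ext x
  exact ⟨fun ⟨hv, hn⟩ => ⟨hv, fun h => hn (hwr.symm.trans h)⟩,
    fun ⟨hv, hn⟩ => ⟨hv, fun h => hn (hwr.trans h)⟩⟩

end TreeOut

section Glue

variable {V : Type*} {G : SimpleGraph V}

lemma acyclic_mono {S T : SimpleGraph V} (h : S ≤ T) (ht : T.IsAcyclic) : S.IsAcyclic := by
  intro v c hc
  exact ht (c.map (SimpleGraph.Hom.ofLE h))
    (hc.map (fun a b hab => by simpa using hab))

lemma reach_nontrivial {S : SimpleGraph V} {v x : V} (hr : S.Reachable v x) (hne : v ≠ x) :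
    ∃ z, S.Adj v z := by
  obtain ⟨p⟩ := hr
  cases p with
  | nil => exact absurd rfl hne
  | cons h _ => exact ⟨_, h⟩

lemma isolated_reach {S : SimpleGraph V} {v z : V} (h : ∀ y, ¬ S.Adj v y)
    (hr : S.Reachable v z) : z = v := by
  obtain ⟨p⟩ := hr
  cases p with
  | nil => rfl
  | cons hadj _ => exact absurd hadj (h _)

/-- splitting reachability in a union of graphs overlapping in at most one vertex -/
lemma reach_split {S₁ S₂ : SimpleGraph V} {w : V}
    (hover : ∀ v, (∃ z, S₁.Adj v z) → (∃ z, S₂.Adj v z) → v = w) {u x : V}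
    (p : (S₁ ⊔ S₂).Walk u x) :
    S₁.Reachable u x ∨ S₂.Reachable u x ∨
      (S₁.Reachable u w ∧ S₂.Reachable w x) ∨ (S₂.Reachable u w ∧ S₁.Reachable w x) := by
  induction p with
  | nil => exact Or.inl (Reachable.refl _)
  | @cons u v x h q ih =>
    rcases h with h | h
    · -- S₁ step
      rcases ih with hr | hr | ⟨h1, h2⟩ | ⟨h1, h2⟩
      · exact Or.inl (h.reachable.trans hr)
      · by_cases hvx : v = x
        · subst hvx; exact Or.inl h.reachable
        · obtain ⟨z, hz⟩ := reach_nontrivial hr hvx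
          have hvw : v = w := hover v ⟨u, h.symm⟩ ⟨z, hz⟩
          subst hvw
          exact Or.inr (Or.inr (Or.inl ⟨h.reachable, hr⟩))
      · exact Or.inr (Or.inr (Or.inl ⟨h.reachable.trans h1, h2⟩))
      · by_cases hvw : v = w
        · subst hvw; exact Or.inl (h.reachable.trans h2)
        · obtain ⟨z, hz⟩ := reach_nontrivial h1 hvw
          have : v = w := hover v ⟨u, h.symm⟩ ⟨z, hz⟩
          exact absurd this hvw
    · -- S₂ step
      rcases ih with hr | hr | ⟨h1, h2⟩ | ⟨h1, h2⟩
      · by_cases hvx : v = x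
        · subst hvx; exact Or.inr (Or.inl h.reachable)
        · obtain ⟨z, hz⟩ := reach_nontrivial hr hvx
          have hvw : v = w := hover v ⟨z, hz⟩ ⟨u, h.symm⟩
          subst hvw
          exact Or.inr (Or.inr (Or.inr ⟨h.reachable, hr⟩))
      · exact Or.inr (Or.inl (h.reachable.trans hr))
      · by_cases hvw : v = w
        · subst hvw; exact Or.inr (Or.inl (h.reachable.trans h2))
        · obtain ⟨z, hz⟩ := reach_nontrivial h1 hvw
          have : v = w := hover v ⟨z, hz⟩ ⟨u, h.symm⟩
          exact absurd this hvw
      · exact Or.inr (Or.inr (Or.inr ⟨h.reachable.trans h1, h2⟩))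

lemma sup_spanningCoe (H₁ H₂ : G.Subgraph) :
    (H₁ ⊔ H₂).spanningCoe = H₁.spanningCoe ⊔ H₂.spanningCoe := by
  ext u v
  simp [Subgraph.sup_adj]

lemma edge_not_mem_other {H₁ H₂ : G.Subgraph} {w : V}
    (hint : H₁.verts ∩ H₂.verts ⊆ {w}) {a b : V} (hab : H₁.Adj a b) :
    s(a,b) ∉ H₂.edgeSet := by
  intro h2
  rw [Subgraph.mem_edgeSet] at h2
  have ha : a = w := hint ⟨hab.fst_mem, h2.fst_mem⟩
  have hb : b = w := hint ⟨hab.snd_mem, h2.snd_mem⟩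
  exact hab.ne (ha.trans hb.symm)

lemma del_sup_spanning {H₁ H₂ : G.Subgraph} {e : Sym2 V} (he2 : e ∉ H₂.edgeSet) :
    ((H₁ ⊔ H₂).deleteEdges {e}).spanningCoe =
      (H₁.deleteEdges {e}).spanningCoe ⊔ H₂.spanningCoe := by
  ext u v
  simp only [SimpleGraph.sup_adj, Subgraph_spanningCoe_adj, Subgraph.deleteEdges_adj,
    Subgraph.sup_adj, Set.mem_singleton_iff]
  constructor
  · rintro ⟨h | h, hne⟩
    · exact Or.inl ⟨h, hne⟩
    · exact Or.inr h
  · rintro (⟨h, hne⟩ | h)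
    · exact ⟨Or.inl h, hne⟩
    · refine ⟨Or.inr h, fun hee => ?_⟩
      rw [← hee] at he2
      exact he2 (Subgraph.mem_edgeSet.mpr h)

lemma hover_of_int {H₁ H₂ : G.Subgraph} {w : V} (hint : H₁.verts ∩ H₂.verts ⊆ {w})
    {e : Sym2 V} : ∀ v, (∃ z, (H₁.deleteEdges {e}).spanningCoe.Adj v z) →
      (∃ z, H₂.spanningCoe.Adj v z) → v = w := by
  rintro v ⟨z1, hz1⟩ ⟨z2, hz2⟩
  have h1 : v ∈ H₁.verts := ((Subgraph.deleteEdges_verts (G' := H₁) (s := {e})) ▸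
    (Subgraph.Adj.fst_mem hz1))
  exact hint ⟨h1, Subgraph.Adj.fst_mem hz2⟩

/-- key bridge lemma for glued graphs -/
lemma glue_bridge {H₁ H₂ : G.Subgraph} {w : V}
    (hint : H₁.verts ∩ H₂.verts ⊆ {w}) (ht1 : H₁.coe.IsAcyclic)
    {a b : V} (hab : H₁.Adj a b) :
    ¬ ((H₁ ⊔ H₂).deleteEdges {s(a,b)}).spanningCoe.Reachable a b := by
  intro hr
  rw [del_sup_spanning (edge_not_mem_other hint hab)] at hr
  obtain ⟨p⟩ := hr
  have hbr : ¬ (H₁.deleteEdges {s(a,b)}).spanningCoe.Reachable a b := tree_bridge ht1 hab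
  have hmem1 : ∀ {v : V}, (∃ z, H₂.spanningCoe.Adj v z) → v ∈ H₁.verts → v = w := by
    rintro v ⟨z, hz⟩ hv1
    exact hint ⟨hv1, Subgraph.Adj.fst_mem hz⟩
  rcases reach_split (hover_of_int hint) p with hr' | hr' | ⟨h1, h2⟩ | ⟨h1, h2⟩
  · exact hbr hr'
  · have ha : a = w := hmem1 (reach_nontrivial hr' hab.ne) hab.fst_mem
    have hb : b = w := hmem1 (reach_nontrivial hr'.symm (Ne.symm hab.ne)) hab.snd_mem
    exact hab.ne (ha.trans hb.symm)
  · by_cases hbw : b = w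
    · exact hbr (hbw ▸ h1)
    · have : b = w := hmem1 (reach_nontrivial h2.symm hbw) hab.snd_mem
      exact hbw this
  · by_cases haw : a = w
    · exact hbr (haw ▸ h2)
    · have : a = w := hmem1 (reach_nontrivial h1 haw) hab.fst_mem
      exact haw this

/-- the glued subgraph is a tree -/
lemma glue_tree {H₁ H₂ : G.Subgraph} {w : V} (h1w : w ∈ H₁.verts) (h2w : w ∈ H₂.verts)
    (hint : H₁.verts ∩ H₂.verts ⊆ {w}) (ht1 : H₁.coe.IsTree) (ht2 : H₂.coe.IsTree) :
    (H₁ ⊔ H₂).coe.IsTree := by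
  constructor
  · exact (Subgraph.connected_sup ⟨ht1.isConnected.preconnected⟩ ⟨ht2.isConnected.preconnected⟩
      (by rw [Subgraph.verts_inf]; exact ⟨w, h1w, h2w⟩)).coe
  · apply coe_acyclic_of_spanning
    rw [isAcyclic_iff_forall_adj_isBridge]
    intro u v huv
    rw [isBridge_iff]
    intro hr
    have hr' : ((H₁ ⊔ H₂).deleteEdges {s(u,v)}).spanningCoe.Reachable u v := by
      rw [spanning_del]; exact hr
    rcases (Subgraph.sup_adj.mp huv) with h | h
    · exact glue_bridge hint ht1.IsAcyclic h hr'
    · have hint' : H₂.verts ∩ H₁.verts ⊆ {w} := by rw [Set.inter_comm]; exact hint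
      rw [sup_comm] at hr'
      exact glue_bridge hint' ht2.IsAcyclic h hr'

/-- treeOut of a glued tree, for edges of the first part -/
lemma glue_treeOut {H₁ H₂ : G.Subgraph} {w : V} (h2w : w ∈ H₂.verts)
    (hint : H₁.verts ∩ H₂.verts ⊆ {w}) (ht2 : H₂.coe.IsTree)
    {a b : V} (hab : H₁.Adj a b) :
    treeOut G (H₁ ⊔ H₂) w s(a,b) = treeOut G H₁ w s(a,b) := by
  have he2 := edge_not_mem_other hint hab
  have hdel := del_sup_spanning (H₁ := H₁) he2
  have hreach2 : ∀ x ∈ H₂.verts,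
      ((H₁ ⊔ H₂).deleteEdges {s(a,b)}).spanningCoe.Reachable w x := by
    intro x hx
    rw [hdel]
    exact (tree_reach_all ht2.isConnected h2w hx).mono le_sup_right
  have hmem1 : ∀ {v : V}, (∃ z, H₂.spanningCoe.Adj v z) → v ∈ H₁.verts → v = w := by
    rintro v ⟨z, hz⟩ hv1
    exact hint ⟨hv1, Subgraph.Adj.fst_mem hz⟩
  ext x
  constructor
  · rintro ⟨hxv, hnr⟩
    rw [Subgraph.verts_sup] at hxv
    have hx1 : x ∈ H₁.verts := by
      rcases hxv with h | h
      · exact h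
      · exact absurd (hreach2 x h) hnr
    refine ⟨hx1, fun hr1 => hnr ?_⟩
    rw [hdel]
    exact hr1.mono le_sup_left
  · rintro ⟨hxv, hnr⟩
    have hxw : x ≠ w := by
      rintro rfl
      exact hnr (Reachable.refl _)
    refine ⟨by rw [Subgraph.verts_sup]; exact Or.inl hxv, fun hr => ?_⟩
    rw [hdel] at hr
    obtain ⟨p⟩ := hr
    rcases reach_split (hover_of_int hint) p with hr' | hr' | ⟨h1, h2⟩ | ⟨h1, h2⟩
    · exact hnr hr'
    · exact hxw (hmem1 (reach_nontrivial hr'.symm hxw) hxv)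
    · exact hxw (hmem1 (reach_nontrivial h2.symm hxw) hxv)
    · exact hnr h2

/-- transferring a walk of a deleted subgraph into an induced subgraph -/
lemma walk_induce {H : G.Subgraph} {S : Set V} {E : Set (Sym2 V)} {c x : V}
    (p : (H.spanningCoe.deleteEdges E).Walk c x) (hsupp : ∀ v ∈ p.support, v ∈ S) :
    ((H.induce S).spanningCoe.deleteEdges E).Reachable c x := by
  induction p with
  | nil => exact Reachable.refl _
  | @cons u v x h q ih =>
    have hu : u ∈ S := hsupp u (SimpleGraph.Walk.start_mem_support _)
    have hv : v ∈ S := by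
      apply hsupp
      rw [SimpleGraph.Walk.support_cons]
      exact List.mem_cons_of_mem _ (SimpleGraph.Walk.start_mem_support _)
    have hadj : ((H.induce S).spanningCoe.deleteEdges E).Adj u v := by
      rw [SimpleGraph.deleteEdges_adj] at h ⊢
      exact ⟨⟨hu, hv, h.1⟩, h.2⟩
    refine hadj.reachable.trans (ih ?_)
    intro z hz
    apply hsupp
    rw [SimpleGraph.Walk.support_cons]
    exact List.mem_cons_of_mem _ hz

/-- deleteEdges is monotone in the subgraph -/
lemma subgraph_del_mono {H₁ H₂ : G.Subgraph} (h : H₁ ≤ H₂) (s : Set (Sym2 V)) :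
    H₁.deleteEdges s ≤ H₂.deleteEdges s := by
  constructor
  · rw [Subgraph.deleteEdges_verts, Subgraph.deleteEdges_verts]
    exact h.1
  · intro u v hu
    rw [Subgraph.deleteEdges_adj] at hu ⊢
    exact ⟨h.2 hu.1, hu.2⟩

lemma mem_cutEdges {G : SimpleGraph V} {X : Set V} {u v : V} (h : G.Adj u v)
    (hu : u ∈ X) (hv : v ∉ X) : s(u,v) ∈ cutEdges G X :=
  ⟨(SimpleGraph.mem_edgeSet G).mpr h, u, v, rfl, hu, hv⟩

end Glue

section Extract

variable {V : Type*}

/-- The main extraction lemma: from a safe spanning tree of `Z` rooted at `w`, a suitable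
vertex `r` is a hub of each part `Zs i`. -/
lemma extract (K : ℕ) (G : SimpleGraph V)
    (Z : Set V) (hZuniv : Z ≠ Set.univ) (t : ℕ) (Zs : Fin t → Set V)
    (hdisj : ∀ i j, i ≠ j → Disjoint (Zs i) (Zs j))
    (hne : ∀ i, (Zs i).Nonempty)
    (hsub : ∀ i, Zs i ⊆ Z)
    (hlam : ∀ X : Set V, IsKCut G K X → X ⊂ Z → ∃ i, X ⊆ Zs i)
    (H : G.Subgraph) (w : V) (hverts : H.verts = Z ∪ {w})
    (htree : H.coe.IsTree) (hsafe : SafeTree G K H w)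
    (r : V) (hrv : r ∈ H.verts)
    (hE3 : ∀ e ∈ H.edgeSet, (∀ v ∈ e, v ∈ Z ∪ {r}) →
      (H.deleteEdges {e}).spanningCoe.Reachable w r)
    (hE2 : ∀ e ∈ H.edgeSet, (∀ v ∈ e, v ∈ Z ∪ {r}) → treeOut G H w e ⊂ Z)
    (hE5 : ∀ c, H.Adj r c → c ∉ Z → ∀ x ∈ Z, x ∉ treeOut G H r s(r,c))
    (hE4 : r ∈ Z → ∃ y, G.Adj r y ∧ y ∉ Z) :
    ∀ i, IsHub G K (Zs i) r := by
  have hwv : w ∈ H.verts := hverts ▸ Or.inr rfl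
  have claimX : ∀ i (x : V), x ∈ Zs i → x ≠ r → ∃ c, H.Adj r c ∧ c ∈ Zs i ∧
      treeOut G H r s(r,c) = treeOut G H w s(r,c) ∧ x ∈ treeOut G H w s(r,c) ∧
      treeOut G H w s(r,c) ⊆ Zs i := by
    intro i x hxi hxr
    have hxZ := hsub i hxi
    have hxv : x ∈ H.verts := hverts ▸ Or.inl hxZ
    obtain ⟨c, hadj, hxb⟩ := branch_classify htree hrv hxv hxr
    have hcZ : c ∈ Z := by
      by_contra hcZ
      exact hE5 c hadj hcZ x hxZ hxb
    have hends : ∀ v ∈ s(r,c), v ∈ Z ∪ {r} := by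
      intro v hv
      rcases Sym2.mem_iff.mp hv with rfl | rfl
      · exact Or.inr rfl
      · exact Or.inl hcZ
    have heH : s(r,c) ∈ H.edgeSet := SimpleGraph.Subgraph.mem_edgeSet.mpr hadj
    have hwr := hE3 _ heH hends
    have htrans := treeOut_root_transfer (G := G) hwr
    have hssub := hE2 _ heH hends
    have hcD : c ∈ treeOut G H w s(r,c) := by
      rw [← htrans]
      exact ⟨hverts ▸ Or.inl hcZ, fun h => tree_bridge htree.IsAcyclic hadj h⟩
    have hKcut : IsKCut G K (treeOut G H w s(r,c)) := by
      refine ⟨⟨c, hcD⟩, fun h => ?_, hsafe _ heH⟩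
      rw [h] at hssub
      exact hssub.ne (subset_antisymm hssub.subset (Set.subset_univ _))
    obtain ⟨m, hm⟩ := hlam _ hKcut hssub
    have hmi : m = i := by
      by_contra hmi
      exact Set.disjoint_left.mp (hdisj m i hmi) (hm (htrans ▸ hxb)) hxi
    rw [hmi] at hm
    exact ⟨c, hadj, hm hcD, htrans, htrans ▸ hxb, hm⟩
  intro i
  have hSsub : Zs i ∪ {r} ⊆ H.verts := by
    rintro v (hv | hv)
    · exact hverts ▸ Or.inl (hsub i hv)
    · rw [Set.mem_singleton_iff] at hv; subst hv; exact hrv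
  set S : Set V := Zs i ∪ {r} with hSdef
  set Hi : G.Subgraph := H.induce S with hHidef
  have hle : Hi ≤ H := ⟨hSsub, fun u v h => h.2.2⟩
  have hcutv : r ∈ cutVerts G (Zs i) := by
    by_cases hri : r ∈ Zs i
    · obtain ⟨y, hay, hyZ⟩ := hE4 (hsub i hri)
      exact ⟨s(r,y), mem_cutEdges hay hri (fun h => hyZ (hsub i h)), Sym2.mem_mk_left r y⟩
    · obtain ⟨x, hx⟩ := hne i
      have hxr : x ≠ r := fun h => hri (h ▸ hx)
      obtain ⟨c, hadj, hcZs, -, -, -⟩ := claimX i x hx hxr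
      exact ⟨s(c,r), mem_cutEdges (hadj.adj_sub.symm) hcZs hri, Sym2.mem_mk_right c r⟩
  -- reachability within Hi
  have hreachHi : ∀ x ∈ S, Hi.spanningCoe.Reachable r x := by
    intro x hxS
    rcases eq_or_ne x r with rfl | hxr
    · exact Reachable.refl _
    · have hxi : x ∈ Zs i := by
        rcases hxS with h | h
        · exact h
        · exact absurd h hxr
      obtain ⟨c, hadj, hcZs, hreq, hxD, hDsub⟩ := claimX i x hxi hxr
      have hcDr : c ∈ treeOut G H r s(r,c) :=
        ⟨hadj.snd_mem, fun h => tree_bridge htree.IsAcyclic hadj h⟩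
      have hxr' : x ∈ treeOut G H r s(r,c) := by rw [hreq]; exact hxD
      have hreach_cx := ((treeOut_eq_far_reach htree hrv hadj hcDr).mp hxr').2
      rw [spanning_del] at hreach_cx
      obtain ⟨p⟩ := hreach_cx
      have hsupp : ∀ v ∈ p.support, v ∈ S := by
        intro v hv
        have hvr : (H.spanningCoe.deleteEdges {s(r,c)}).Reachable c v :=
          walk_reach_support p hv
        have hvverts : v ∈ H.verts :=
          spanning_reach_end_mem_verts (hvr.mono (SimpleGraph.deleteEdges_le _)) hadj.snd_mem
        have : v ∈ treeOut G H r s(r,c) := by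
          refine (treeOut_eq_far_reach htree hrv hadj hcDr).mpr ⟨hvverts, ?_⟩
          rw [spanning_del]
          exact hvr
        rw [hreq] at this
        exact Or.inl (hDsub this)
      have hind := walk_induce p hsupp
      have h2 : Hi.spanningCoe.Reachable c x :=
        hind.mono (SimpleGraph.deleteEdges_le _)
      have hadjHi : Hi.spanningCoe.Adj r c :=
        show Hi.Adj r c from ⟨Or.inr rfl, Or.inl hcZs, hadj⟩
      exact hadjHi.reachable.trans h2
  have htreeHi : Hi.coe.IsTree := by
    constructor
    · have : Hi.Connected := by
        rw [Subgraph.connected_iff]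
        constructor
        · constructor
          rintro ⟨a, ha⟩ ⟨b, hb⟩
          have hab : Hi.spanningCoe.Reachable a b :=
            (hreachHi a ha).symm.trans (hreachHi b hb)
          obtain ⟨hb', hr⟩ := coe_reach_of_spanning ha hab
          exact hr
        · exact ⟨r, Or.inr rfl⟩
      exact this.coe
    · exact coe_acyclic_of_spanning
        (acyclic_mono (Subgraph.spanningCoe_le_of_le hle)
          (spanning_acyclic_of_coe htree.IsAcyclic))
  have hsafeHi' : ∀ a b : V, Hi.Adj a b →
      (cutEdges G (treeOut G Hi r s(a,b))).ncard = K := by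
    intro a b hadjHi
    have hab : H.Adj a b := hadjHi.2.2
    have haS : a ∈ S := hadjHi.fst_mem
    have hbS : b ∈ S := hadjHi.snd_mem
    have hSZ : ∀ v ∈ S, v ∈ Z ∪ {r} := by
      rintro v (hv | hv)
      · exact Or.inl (hsub i hv)
      · exact Or.inr hv
    have hends : ∀ v ∈ s(a,b), v ∈ Z ∪ {r} := by
      intro v hv
      rcases Sym2.mem_iff.mp hv with rfl | rfl
      · exact hSZ _ haS
      · exact hSZ _ hbS
    have heH : s(a,b) ∈ H.edgeSet := SimpleGraph.Subgraph.mem_edgeSet.mpr hab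
    have hD := hE2 _ heH hends
    have hwr := hE3 _ heH hends
    have hK := hsafe _ heH
    have hrD : r ∉ treeOut G H w s(a,b) := fun h => h.2 hwr
    -- the far endpoint of the edge is in D and in Zs i
    have hfar : ∃ f, f ∈ treeOut G H w s(a,b) ∧ f ∈ S := by
      rcases exists_far htree hwv hab with ⟨hfa, -⟩ | ⟨hfb, -⟩
      · exact ⟨a, hfa, haS⟩
      · exact ⟨b, hfb, hbS⟩
    obtain ⟨f, hfD, hfS⟩ := hfar
    have hfZs : f ∈ Zs i := by
      rcases hfS with h | h
      · exact h
      · rw [Set.mem_singleton_iff] at h; subst h; exact absurd hfD hrD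
    have hKcut : IsKCut G K (treeOut G H w s(a,b)) := by
      refine ⟨⟨f, hfD⟩, fun h => ?_, hK⟩
      rw [h] at hD
      exact hD.ne (subset_antisymm hD.subset (Set.subset_univ _))
    obtain ⟨m, hm⟩ := hlam _ hKcut hD
    have hmi : m = i := by
      by_contra hmi
      exact Set.disjoint_left.mp (hdisj m i hmi) (hm hfD) hfZs
    rw [hmi] at hm
    have hDZs : treeOut G H w s(a,b) ⊆ Zs i := hm
    -- now show the treeOut sets agree
    suffices hset : treeOut G Hi r s(a,b) = treeOut G H w s(a,b) by
      rw [hset]; exact hK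
    ext x
    constructor
    · rintro ⟨hxS', hnr⟩
      by_contra hxD
      have hxr : x ≠ r := by
        rintro rfl
        exact hnr (Reachable.refl _)
      have hxZs : x ∈ Zs i := by
        rcases hxS' with h | h
        · exact h
        · exact absurd h hxr
      obtain ⟨c, hadjrc, hcZs, hreq, hxDc, hDcsub⟩ := claimX i x hxZs hxr
      have hnec : s(a,b) ≠ s(r,c) := by
        intro h
        exact hxD (by rw [h]; exact hxDc)
      have hreachwx : (H.deleteEdges {s(a,b)}).spanningCoe.Reachable w x := by
        by_contra hh
        exact hxD ⟨hverts ▸ Or.inl (hsub i hxZs), hh⟩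
      rw [spanning_del] at hreachwx
      obtain ⟨p⟩ := hreachwx
      have hsplit := walk_split r c p
      rw [SimpleGraph.deleteEdges_deleteEdges] at hsplit
      have hmono_c : H.spanningCoe.deleteEdges ({s(a,b)} ∪ {s(r,c)}) ≤
          H.spanningCoe.deleteEdges {s(r,c)} :=
        SimpleGraph.deleteEdges_anti Set.subset_union_right
      have hcDr : c ∈ treeOut G H r s(r,c) :=
        ⟨hadjrc.snd_mem, fun h => tree_bridge htree.IsAcyclic hadjrc h⟩
      rcases hsplit with hr' | ⟨h1, h2⟩ | ⟨h1, h2⟩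
      · refine hxDc.2 ?_
        rw [spanning_del]
        exact hr'.mono hmono_c
      · obtain ⟨q⟩ := h2
        have hsupp : ∀ v ∈ q.support, v ∈ S := by
          intro v hv
          have hvr := walk_reach_support q hv
          have hvr' : (H.spanningCoe.deleteEdges {s(r,c)}).Reachable c v := hvr.mono hmono_c
          have hvverts : v ∈ H.verts :=
            spanning_reach_end_mem_verts (hvr'.mono (SimpleGraph.deleteEdges_le _))
              hadjrc.snd_mem
          have : v ∈ treeOut G H r s(r,c) := by
            refine (treeOut_eq_far_reach htree hrv hadjrc hcDr).mpr ⟨hvverts, ?_⟩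
            rw [spanning_del]
            exact hvr'
          rw [hreq] at this
          exact Or.inl (hDcsub this)
        have hind := walk_induce q hsupp
        have h3 : (Hi.spanningCoe.deleteEdges {s(a,b)}).Reachable c x :=
          hind.mono (SimpleGraph.deleteEdges_anti Set.subset_union_left)
        have hadjHi' : (Hi.spanningCoe.deleteEdges {s(a,b)}).Adj r c := by
          rw [SimpleGraph.deleteEdges_adj]
          refine ⟨show Hi.Adj r c from ⟨Or.inr rfl, Or.inl hcZs, hadjrc⟩, ?_⟩
          rw [Set.mem_singleton_iff]
          exact fun h => hnec h.symm
        have : (Hi.spanningCoe.deleteEdges {s(a,b)}).Reachable r x :=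
          hadjHi'.reachable.trans h3
        rw [← spanning_del] at this
        exact hnr this
      · have hcD : c ∈ treeOut G H w s(r,c) := hreq ▸ hcDr
        refine hcD.2 ?_
        rw [spanning_del]
        exact h1.mono hmono_c
    · intro hxD
      refine ⟨Or.inl (hDZs hxD), fun hr => ?_⟩
      have hle2 : (Hi.deleteEdges {s(a,b)}).spanningCoe ≤
          (H.deleteEdges {s(a,b)}).spanningCoe :=
        Subgraph.spanningCoe_le_of_le (subgraph_del_mono hle _)
      exact hxD.2 (hwr.trans (hr.mono hle2))
  have hsafeHi : SafeTree G K Hi r := by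
    intro e he
    revert he
    induction e using Sym2.ind with
    | _ a b =>
      intro he
      exact hsafeHi' a b (SimpleGraph.Subgraph.mem_edgeSet.mp he)
  exact ⟨hcutv, Hi, rfl, htreeHi, hsafeHi⟩

end Extract

section Assemble

variable {V : Type*}

lemma edge_verts_mem {G : SimpleGraph V} {H : G.Subgraph} {e : Sym2 V} (he : e ∈ H.edgeSet) :
    ∀ v ∈ e, v ∈ H.verts := by
  revert he
  induction e using Sym2.ind with
  | _ a b =>
    intro he v hv
    have hadj : H.Adj a b := SimpleGraph.Subgraph.mem_edgeSet.mp he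
    rcases Sym2.mem_iff.mp hv with rfl | rfl
    · exact hadj.fst_mem
    · exact hadj.snd_mem

/-- `glue_treeOut` for an abstract edge -/
lemma glue_treeOut' {G : SimpleGraph V} {H₁ H₂ : G.Subgraph} {w : V} (h2w : w ∈ H₂.verts)
    (hint : H₁.verts ∩ H₂.verts ⊆ {w}) (ht2 : H₂.coe.IsTree)
    {e : Sym2 V} (he : e ∈ H₁.edgeSet) :
    treeOut G (H₁ ⊔ H₂) w e = treeOut G H₁ w e := by
  revert he
  induction e using Sym2.ind with
  | _ a b =>
    intro he
    exact glue_treeOut h2w hint ht2 (SimpleGraph.Subgraph.mem_edgeSet.mp he)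

/-- gluing hub trees for all the parts gives a hub tree for `Z` -/
lemma glue_fold (K : ℕ) (G : SimpleGraph V)
    (Z : Set V) (hZne : Z.Nonempty) (t : ℕ) (Zs : Fin t → Set V)
    (hdisj : ∀ i j, i ≠ j → Disjoint (Zs i) (Zs j))
    (hunion : Z = ⋃ i, Zs i)
    (w : V) (hwc : w ∈ cutVerts G Z)
    (hhubs : ∀ i, IsHub G K (Zs i) w) :
    IsHub G K Z w := by
  classical
  choose Hs hverts htrees hsafes using fun i => (hhubs i).2
  have ht0 : 0 < t := by
    rcases Nat.eq_zero_or_pos t with rfl | h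
    · rw [hunion] at hZne
      simp [Set.iUnion_of_empty] at hZne
    · exact h
  have key : ∀ s : Finset (Fin t), s.Nonempty → ∃ Ks : G.Subgraph,
      Ks.verts = (⋃ i ∈ s, Zs i) ∪ {w} ∧ Ks.coe.IsTree ∧ SafeTree G K Ks w := by
    intro s hs
    induction hs using Finset.Nonempty.cons_induction with
    | singleton a =>
      refine ⟨Hs a, ?_, htrees a, hsafes a⟩
      rw [hverts a]
      congr 1
      ext x
      simp
    | cons a s ha hs IH =>
      obtain ⟨Ks, hKv, hKt, hKs⟩ := IH
      have h1w : w ∈ (Hs a).verts := (hverts a) ▸ Or.inr rfl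
      have h2w : w ∈ Ks.verts := hKv ▸ Or.inr rfl
      have hint : (Hs a).verts ∩ Ks.verts ⊆ {w} := by
        rw [hverts a, hKv]
        rintro x ⟨hx1 | hx1, hx2 | hx2⟩
        · obtain ⟨j, hj⟩ := Set.mem_iUnion.mp hx2
          obtain ⟨hjs, hj⟩ := Set.mem_iUnion.mp hj
          have haj : a ≠ j := fun h => ha (h ▸ hjs)
          exact absurd hj (Set.disjoint_left.mp (hdisj a j haj) hx1)
        · exact hx2
        · exact hx1
        · exact hx1
      refine ⟨Hs a ⊔ Ks, ?_, glue_tree h1w h2w hint (htrees a) hKt, ?_⟩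
      · rw [Subgraph.verts_sup, hverts a, hKv]
        ext x
        simp only [Set.mem_union, Set.mem_singleton_iff, Set.mem_iUnion, Finset.mem_cons]
        constructor
        · rintro ((h | h) | (⟨j, hj, hjx⟩ | h))
          · exact Or.inl ⟨a, Or.inl rfl, h⟩
          · exact Or.inr h
          · exact Or.inl ⟨j, Or.inr hj, hjx⟩
          · exact Or.inr h
        · rintro (⟨j, (rfl | hj), hjx⟩ | h)
          · exact Or.inl (Or.inl hjx)
          · exact Or.inr (Or.inl ⟨j, hj, hjx⟩)
          · exact Or.inr (Or.inr h)
      · intro e he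
        rw [Subgraph.edgeSet_sup] at he
        rcases he with he | he
        · rw [glue_treeOut' h2w hint hKt he]
          exact hsafes a _ he
        · have hint' : Ks.verts ∩ (Hs a).verts ⊆ {w} := by
            rw [Set.inter_comm]; exact hint
          rw [sup_comm, glue_treeOut' h1w hint' (htrees a) he]
          exact hKs _ he
  haveI : Nonempty (Fin t) := ⟨⟨0, ht0⟩⟩
  obtain ⟨Ks, hKv, hKt, hKs⟩ := key Finset.univ Finset.univ_nonempty
  refine ⟨hwc, Ks, ?_, hKt, hKs⟩
  rw [hKv, hunion]
  congr 1
  ext x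
  simp

/-- extending a hub tree by a pendant edge -/
lemma pendant (K : ℕ) (G : SimpleGraph V) (Z : Set V) (hZcut : IsKCut G K Z)
    {u w' : V} (hu : IsHub G K Z u) (huZ : u ∈ Z) (hadj : G.Adj u w') (hwZ : w' ∉ Z) :
    IsHub G K Z w' := by
  obtain ⟨-, H, hverts, htree, hsafe⟩ := hu
  have huw : u ≠ w' := fun h => hwZ (h ▸ huZ)
  have hvertsZ : H.verts = Z := by
    rw [hverts]
    exact Set.union_eq_self_of_subset_right (by simpa using huZ)
  set P := G.subgraphOfAdj hadj with hPdef
  have hPverts : P.verts = {u, w'} := rfl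
  have hPadj : P.Adj u w' := by rw [hPdef, subgraphOfAdj_adj]
  have hint : H.verts ∩ P.verts ⊆ {u} := by
    rw [hvertsZ, hPverts]
    rintro x ⟨hx1, (rfl | rfl)⟩
    · rfl
    · exact absurd hx1 hwZ
  have hPtree : P.coe.IsTree := by
    constructor
    · exact (Subgraph.subgraphOfAdj_connected hadj).coe
    · apply coe_acyclic_of_spanning
      intro v c hc
      have h3 := hc.three_le_length
      have hedges : ∀ e ∈ c.edges, e = s(u,w') := by
        intro e hee
        have h1 : e ∈ P.spanningCoe.edgeSet := c.edges_subset_edgeSet hee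
        have h2 : e ∈ P.edgeSet := h1
        rw [hPdef, edgeSet_subgraphOfAdj] at h2
        exact h2
      have hnodup := hc.edges_nodup
      have hlen : 2 ≤ c.edges.length := by
        rw [SimpleGraph.Walk.length_edges]
        omega
      obtain ⟨e₁, e₂, l, heq⟩ : ∃ e₁ e₂ l, c.edges = e₁ :: e₂ :: l := by
        rcases hc1 : c.edges with - | ⟨e₁, -|⟨e₂,l⟩⟩
        · rw [hc1] at hlen; simp at hlen
        · rw [hc1] at hlen; simp at hlen
        · exact ⟨_, _, _, rfl⟩
      rw [heq] at hnodup hedges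
      have h1 : e₁ = s(u,w') := hedges _ List.mem_cons_self
      have h2 : e₂ = s(u,w') := hedges _ (List.mem_cons_of_mem _ List.mem_cons_self)
      rw [List.nodup_cons] at hnodup
      exact hnodup.1 (by rw [h1, h2]; exact List.mem_cons_self)
  have h1u : u ∈ H.verts := hvertsZ ▸ huZ
  have h2u : u ∈ P.verts := Or.inl rfl
  refine ⟨⟨s(u,w'), mem_cutEdges hadj huZ hwZ, Sym2.mem_mk_right u w'⟩, H ⊔ P, ?_, ?_, ?_⟩
  · rw [Subgraph.verts_sup, hvertsZ, hPverts]
    ext x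
    simp only [Set.mem_union, Set.mem_insert_iff, Set.mem_singleton_iff]
    constructor
    · rintro (h | rfl | rfl)
      · exact Or.inl h
      · exact Or.inl huZ
      · exact Or.inr rfl
    · rintro (h | rfl)
      · exact Or.inl h
      · exact Or.inr (Or.inr rfl)
  · exact glue_tree h1u h2u hint htree hPtree
  · intro e he
    rw [Subgraph.edgeSet_sup] at he
    rcases he with he | he
    · -- edge of H : root transfer to u, then treeOut of glue
      have hew : ∀ v ∈ e, v ∈ H.verts := edge_verts_mem he
      have hnew : s(w',u) ≠ e := by
        intro h
        have : w' ∈ H.verts := by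
          rw [← h] at hew
          exact hew w' (Sym2.mem_mk_left _ _)
        rw [hvertsZ] at this
        exact hwZ this
      have hadj' : ((H ⊔ P).deleteEdges {e}).spanningCoe.Adj w' u := by
        rw [Subgraph_spanningCoe_adj, Subgraph.deleteEdges_adj]
        exact ⟨Subgraph.sup_adj.mpr (Or.inr hPadj.symm), by simpa using hnew⟩
      have htr : treeOut G (H ⊔ P) w' e = treeOut G (H ⊔ P) u e := by
        have := treeOut_root_transfer (G := G) (H := H ⊔ P) (w := w') (r := u) (e := e)
          hadj'.reachable
        rw [this]
      rw [htr, glue_treeOut' h2u hint hPtree he]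
      exact hsafe _ he
    · have heq : e = s(u,w') := by
        rw [hPdef, edgeSet_subgraphOfAdj] at he
        exact he
      subst heq
      have hisol : ∀ y, ¬ ((H ⊔ P).deleteEdges {s(u,w')}).spanningCoe.Adj w' y := by
        intro y hy
        rw [Subgraph_spanningCoe_adj, Subgraph.deleteEdges_adj] at hy
        rcases Subgraph.sup_adj.mp hy.1 with h | h
        · have : w' ∈ H.verts := h.fst_mem
          rw [hvertsZ] at this
          exact hwZ this
        · rw [hPdef, subgraphOfAdj_adj] at h
          exact hy.2 (by rw [Set.mem_singleton_iff, ← h, Sym2.eq_swap])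
      have hTeq : treeOut G (H ⊔ P) w' s(u,w') = Z := by
        ext x
        constructor
        · rintro ⟨hxv, hnr⟩
          have hxw : x ≠ w' := by
            rintro rfl
            exact hnr (Reachable.refl _)
          rw [Subgraph.verts_sup, hvertsZ, hPverts] at hxv
          rcases hxv with h | rfl | rfl
          · exact h
          · exact huZ
          · exact absurd rfl hxw
        · intro hx
          refine ⟨by rw [Subgraph.verts_sup, hvertsZ]; exact Or.inl hx, fun hr => ?_⟩
          exact hwZ ((isolated_reach hisol hr) ▸ hx)
      rw [hTeq]
      exact hZcut.2.2

end Assemble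

section Main

variable {V : Type*}

/-- In the degenerate case where some tree edge separates off all of `Z`,
the root has a unique neighbour `r ∈ Z`, and `r` is a hub of every part. -/
lemma caseB (K : ℕ) (G : SimpleGraph V)
    (Z : Set V) (hZuniv : Z ≠ Set.univ) (t : ℕ) (Zs : Fin t → Set V)
    (hdisj : ∀ i j, i ≠ j → Disjoint (Zs i) (Zs j))
    (hne : ∀ i, (Zs i).Nonempty)
    (hsub : ∀ i, Zs i ⊆ Z)
    (hlam : ∀ X : Set V, IsKCut G K X → X ⊂ Z → ∃ i, X ⊆ Zs i)
    (H : G.Subgraph) (w' : V) (hverts : H.verts = Z ∪ {w'})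
    (htree : H.coe.IsTree) (hsafe : SafeTree G K H w')
    (e₀ : Sym2 V) (he₀ : e₀ ∈ H.edgeSet) (hTe₀ : treeOut G H w' e₀ = Z) :
    ∃ r, r ∈ Z ∧ G.Adj r w' ∧ (∀ i, IsHub G K (Zs i) r) := by
  have hwv : w' ∈ H.verts := hverts ▸ Or.inr rfl
  have hwZ : w' ∉ Z := fun h => root_not_mem_treeOut (by rw [hTe₀]; exact h)
  have main : ∀ a b : V, H.Adj a b → treeOut G H w' s(a,b) = Z →
      a ∉ treeOut G H w' s(a,b) → ∃ r, r ∈ Z ∧ G.Adj r w' ∧ (∀ i, IsHub G K (Zs i) r) := by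
    intro a b hab hT hna
    -- a is the near endpoint: it must be the root w'
    have haw : a = w' := by
      have hav : a ∈ H.verts := hab.fst_mem
      have : a ∉ Z := by rw [← hT]; exact hna
      rcases hverts ▸ hav with h | h
      · exact absurd h this
      · exact h
    rw [haw] at hab hT hna
    clear haw
    -- so the edge is s(w', b) with b ∈ Z
    have hbZ : b ∈ Z := by
      have hbv : b ∈ H.verts := hab.snd_mem
      rcases hverts ▸ hbv with h | h
      · exact h
      · exact absurd h (Ne.symm hab.ne)
    have hbw : b ≠ w' := fun h => hwZ (h ▸ hbZ)
    -- every H-neighbour of w' is b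
    have hdeg : ∀ y, H.Adj w' y → y = b := by
      intro y hy
      by_contra hyb
      have hne' : s(w', y) ∉ ({s(w', b)} : Set (Sym2 V)) := by
        rw [Set.mem_singleton_iff]
        intro h
        rcases Sym2.eq_iff.mp h with ⟨-, h2⟩ | ⟨h1, -⟩
        · exact hyb h2
        · exact hwZ (h1 ▸ hbZ)
      have hreach : (H.deleteEdges {s(w',b)}).spanningCoe.Reachable w' y := by
        refine SimpleGraph.Adj.reachable ?_
        rw [Subgraph_spanningCoe_adj, Subgraph.deleteEdges_adj]
        exact ⟨hy, hne'⟩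
      have hyT : y ∉ treeOut G H w' s(w',b) := fun h => h.2 hreach
      rw [hT] at hyT
      have hyv : y ∈ H.verts := hy.snd_mem
      rcases hverts ▸ hyv with h | h
      · exact hyT h
      · rw [Set.mem_singleton_iff] at h
        subst h
        exact hy.adj_sub.ne rfl
    -- w' is isolated after deleting the edge
    have hisol : ∀ y, ¬ (H.deleteEdges {s(w',b)}).spanningCoe.Adj w' y := by
      intro y hy
      rw [Subgraph_spanningCoe_adj, Subgraph.deleteEdges_adj] at hy
      have : y = b := hdeg y hy.1
      subst this
      exact hy.2 rfl
    have hadjG : G.Adj b w' := hab.adj_sub.symm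
    refine ⟨b, hbZ, hadjG, ?_⟩
    have hbv : b ∈ H.verts := hab.snd_mem
    -- the E3 property
    have hE3 : ∀ e ∈ H.edgeSet, (∀ v ∈ e, v ∈ Z ∪ {b}) →
        (H.deleteEdges {e}).spanningCoe.Reachable w' b := by
      intro e he hends
      have hnew : s(w', b) ≠ e := by
        intro h
        have := hends w' (h ▸ Sym2.mem_mk_left w' b)
        rcases this with h' | h'
        · exact hwZ h'
        · rw [Set.mem_singleton_iff] at h'
          exact hbw h'.symm
      refine SimpleGraph.Adj.reachable ?_
      rw [Subgraph_spanningCoe_adj, Subgraph.deleteEdges_adj]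
      exact ⟨hab, by simpa using hnew⟩
    apply extract K G Z hZuniv t Zs hdisj hne hsub hlam H w' hverts htree hsafe b hbv hE3
    · -- E2
      intro e he hends
      have hW : treeOut G H w' e ⊆ Z := by
        rintro x ⟨hxv, hnr⟩
        rcases hverts ▸ hxv with h | h
        · exact h
        · rw [Set.mem_singleton_iff] at h
          subst h
          exact absurd (Reachable.refl _) hnr
      have hbT : b ∉ treeOut G H w' e := fun h => h.2 (hE3 e he hends)
      refine Set.ssubset_iff_subset_ne.mpr ⟨hW, fun h => hbT (h ▸ hbZ)⟩
    · -- E5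
      intro c hc hcZ x hxZ hxT
      have hcw : c = w' := by
        rcases hverts ▸ hc.snd_mem with h | h
        · exact absurd h hcZ
        · exact h
      rw [hcw] at hxT
      have hswap : s(b, w') = s(w', b) := Sym2.eq_swap
      rw [hswap] at hxT
      have hxv : x ∈ H.verts := hverts ▸ Or.inl hxZ
      obtain ⟨p⟩ := tree_reach_all htree.isConnected hwv hxv
      rcases walk_split w' b p with hr | ⟨h1, h2⟩ | ⟨h1, h2⟩
      · rw [← spanning_del] at hr
        exact hwZ ((isolated_reach hisol hr) ▸ hxZ)
      · rw [← spanning_del] at h2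
        exact hxT.2 h2
      · rw [← spanning_del] at h1
        exact hbw (isolated_reach hisol h1)
    · -- E4
      intro _
      exact ⟨w', hadjG, hwZ⟩
  -- apply `main` to the two possible orientations of the edge
  revert he₀ hTe₀
  induction e₀ using Sym2.ind with
  | _ a b =>
    intro he₀ hTe₀
    have hab : H.Adj a b := SimpleGraph.Subgraph.mem_edgeSet.mp he₀
    rcases near_endpoint htree.isConnected hwv hab with hna | hnb
    · exact main a b hab hTe₀ hna
    · have hswap : s(b,a) = s(a,b) := Sym2.eq_swap
      refine main b a hab.symm ?_ ?_
      · rw [hswap]; exact hTe₀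
      · rw [hswap]; exact hnb

end Main

/-- (Hub recurrence for Type-0 internal nodes.) -/
theorem hubs_type0 {V : Type*} [Fintype V] (K : ℕ)
    (G : SimpleGraph V) (hG : KEdgeConnected G K)
    (Z : Set V) (hZ : IsKCut G K Z)
    (t : ℕ) (Zs : Fin t → Set V)
    (hdisj : ∀ i j, i ≠ j → Disjoint (Zs i) (Zs j))
    (hne : ∀ i, (Zs i).Nonempty)
    (hunion : Z = ⋃ i, Zs i)
    (hcuts : ∀ i, IsKCut G K (Zs i))
    (hlam : ∀ X : Set V, IsKCut G K X → X ⊂ Z → ∃ i, X ⊆ Zs i) :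
    hubSet G K Z =
      (cutVerts G Z ∩ ⋂ i, hubSet G K (Zs i)) ∪
        (nbrSet G ((cutVerts G Z ∩ ⋂ i, hubSet G K (Zs i)) ∩ Z) \ Z) := by
  have hZne := hZ.1
  have hZuniv := hZ.2.1
  have hsub : ∀ i, Zs i ⊆ Z := by
    intro i x hx
    rw [hunion]
    exact Set.mem_iUnion.mpr ⟨i, hx⟩
  ext w'
  constructor
  · intro hw'
    obtain ⟨hwc, H, hverts, htree, hsafe⟩ := hw'
    by_cases hA : ∀ e ∈ H.edgeSet, treeOut G H w' e ≠ Z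
    · -- every branch is proper : w' is a hub of every part
      left
      refine ⟨hwc, Set.mem_iInter.mpr fun i => ?_⟩
      refine extract K G Z hZuniv t Zs hdisj hne hsub hlam H w' hverts htree hsafe w'
        (hverts ▸ Or.inr rfl) (fun e he hends => Reachable.refl w') ?_ ?_ ?_ i
      · -- E2
        intro e he hends
        have hW : treeOut G H w' e ⊆ Z := by
          rintro x ⟨hxv, hnr⟩
          rcases hverts ▸ hxv with h | h
          · exact h
          · rw [Set.mem_singleton_iff] at h
            subst h
            exact absurd (Reachable.refl _) hnr
        exact Set.ssubset_iff_subset_ne.mpr ⟨hW, hA e he⟩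
      · -- E5 : vacuous
        intro c hc hcZ x hxZ hxT
        rcases hverts ▸ hc.snd_mem with h | h
        · exact hcZ h
        · rw [Set.mem_singleton_iff] at h
          subst h
          exact hc.adj_sub.ne rfl
      · -- E4
        intro hrZ
        obtain ⟨e, ⟨heG, u, v, heq, hu, hv⟩, hwe⟩ := hwc
        subst heq
        rcases Sym2.mem_iff.mp hwe with rfl | rfl
        · exact ⟨v, (SimpleGraph.mem_edgeSet G).mp heG, hv⟩
        · exact absurd hrZ hv
    · -- some branch equals Z : w' hangs off a hub r ∈ Z
      push_neg at hA
      obtain ⟨e₀, he₀, hTe₀⟩ := hA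
      have hwZ : w' ∉ Z := fun h => root_not_mem_treeOut (by rw [hTe₀]; exact h)
      obtain ⟨r, hrZ, hradj, hrhubs⟩ := caseB K G Z hZuniv t Zs hdisj hne hsub hlam H w'
        hverts htree hsafe e₀ he₀ hTe₀
      right
      refine ⟨⟨r, ⟨⟨?_, Set.mem_iInter.mpr fun i => hrhubs i⟩, hrZ⟩, hradj.symm.symm⟩, hwZ⟩
      exact ⟨s(r, w'), mem_cutEdges hradj hrZ hwZ, Sym2.mem_mk_left r w'⟩
  · intro hw'
    rcases hw' with ⟨hwc, hint⟩ | ⟨⟨u, ⟨⟨huc, huhubs⟩, huZ⟩, huadj⟩, hwZ⟩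
    · exact glue_fold K G Z hZne t Zs hdisj hunion w' hwc
        (fun i => Set.mem_iInter.mp hint i)
    · have hu : IsHub G K Z u := glue_fold K G Z hZne t Zs hdisj hunion u huc
        (fun i => Set.mem_iInter.mp huhubs i)
      exact pendant K G Z hZ hu huZ huadj hwZ
end

section
/- Let G be a K-edge-connected finite simple graph and let Z_{s-1}, Z_s, ..., Z_ℓ be pairwise disjoint vertex sets such that ∂Z_i is a K-cut for each i = s-1, ..., ℓ-1. Suppose w_s, w_{s+1}, ..., w_ℓ is a back spine, that is, a path in G (consecutive vertices adjacent in G) such that w_s ∈ Z_s ∩ H̃(Z_{s-1}) ∩ H̃(Z_s), w_i ∈ Z_i ∩ H̃(Z_i) for each i = s+1, ..., ℓ-1, and w_ℓ ∈ Z_ℓ. Then w_i ∈ H̃(Z_{i-1}) for all i = s, ..., ℓ. -/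
open SimpleGraph

variable {V : Type*}

section AuxHub

variable {V : Type*}

/-- Closure lemma: a set closed under adjacency contains everything reachable from a member. -/
lemma reach_closed' {G : SimpleGraph V} {S : Set V}
    (hS : ∀ a b, G.Adj a b → a ∈ S → b ∈ S) :
    ∀ {u x : V}, G.Reachable u x → u ∈ S → x ∈ S := by
  intro u x h
  obtain ⟨p⟩ := h
  induction p with
  | nil => exact id
  | cons h p ih => exact fun hu => ih (hS _ _ h hu)

/-- Adding a pendant edge `s(u,v)` at a fresh vertex `v` preserves acyclicity. -/
lemma acyclic_pendant' {G₀ G₁ : SimpleGraph V} (hac : G₀.IsAcyclic)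
    {u v : V} (huv : u ≠ v)
    (hup : ∀ a b, G₁.Adj a b → G₀.Adj a b ∨ s(a, b) = s(u, v))
    (hv : ∀ a, ¬ G₀.Adj v a) : G₁.IsAcyclic := by
  classical
  intro z c hc
  by_cases hvs : v ∈ c.support
  · refine (?_ : ∀ q : G₁.Walk v v, ¬ q.IsCycle) _ (hc.rotate hvs)
    intro q hq
    cases q with
    | nil => exact SimpleGraph.Walk.IsCycle.not_of_nil hq
    | @cons _ b _ h p =>
      have hbu : b = u := by
        rcases hup _ _ h with h0 | he
        · exact absurd h0 (hv _)
        · rw [Sym2.eq_iff] at he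
          rcases he with ⟨h1, h2⟩ | ⟨h1, h2⟩
          · exact absurd h1.symm huv
          · exact h2
      rw [SimpleGraph.Walk.cons_isCycle_iff] at hq
      obtain ⟨hp, hne⟩ := hq
      have hrn : ¬ p.reverse.Nil := by
        refine SimpleGraph.Walk.not_nil_of_ne ?_
        intro hvb
        exact huv (hbu ▸ hvb.symm)
      rw [SimpleGraph.Walk.not_nil_iff] at hrn
      obtain ⟨b', h', q', hq'⟩ := hrn
      have hb'u : b' = u := by
        rcases hup _ _ h' with h0 | he
        · exact absurd h0 (hv _)
        · rw [Sym2.eq_iff] at he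
          rcases he with ⟨h1, h2⟩ | ⟨h1, h2⟩
          · exact absurd h1.symm huv
          · exact h2
      have hmem : s(v, b') ∈ p.reverse.edges := by
        rw [hq']; simp
      rw [SimpleGraph.Walk.edges_reverse, List.mem_reverse, hb'u, ← hbu] at hmem
      exact hne hmem
  · have hedges : ∀ e ∈ c.edges, e ∈ G₀.edgeSet := by
      intro e he
      induction e using Sym2.ind with
      | _ a b =>
        have hadj : G₁.Adj a b := c.adj_of_mem_edges he
        rcases hup _ _ hadj with h0 | he'
        · exact h0
        · exfalso
          rw [Sym2.eq_iff] at he'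
          rcases he' with ⟨rfl, rfl⟩ | ⟨rfl, rfl⟩
          · exact hvs (c.snd_mem_support_of_mem_edges he)
          · exact hvs (c.fst_mem_support_of_mem_edges he)
    exact hac (c.transfer G₀ hedges) (hc.transfer hedges)

/-- The inclusion homomorphism from `H.coe` to `H.spanningCoe`. -/
def coeToSpanning' {G : SimpleGraph V} (H : G.Subgraph) : H.coe →g H.spanningCoe :=
  ⟨Subtype.val, fun h => h⟩

lemma exists_lift' {G : SimpleGraph V} {H : G.Subgraph} :
    ∀ {a b : V} (p : H.spanningCoe.Walk a b) (ha : a ∈ H.verts) (hb : b ∈ H.verts),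
      ∃ q : H.coe.Walk ⟨a, ha⟩ ⟨b, hb⟩, q.map (coeToSpanning' H) = p := by
  intro a b p
  induction p with
  | nil => exact fun ha hb => ⟨SimpleGraph.Walk.nil, rfl⟩
  | @cons a c b h p ih =>
    intro ha hb
    have hc2 : c ∈ H.verts := H.edge_vert (H.adj_symm h)
    obtain ⟨q, hq⟩ := ih hc2 hb
    exact ⟨SimpleGraph.Walk.cons (by exact h) q, by subst hq; rfl⟩

lemma spanning_acyclic_of_coe' {G : SimpleGraph V} {H : G.Subgraph}
    (hac : H.coe.IsAcyclic) : H.spanningCoe.IsAcyclic := by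
  intro a c hc
  cases c with
  | nil => exact SimpleGraph.Walk.IsCycle.not_of_nil hc
  | cons h p =>
    have ha : a ∈ H.verts := H.edge_vert h
    obtain ⟨q, hq⟩ := exists_lift' (SimpleGraph.Walk.cons h p) ha ha
    rw [← hq] at hc
    exact hac q
      ((SimpleGraph.Walk.map_isCycle_iff_of_injective Subtype.val_injective).mp hc)

lemma coe_acyclic_of_spanning' {G : SimpleGraph V} {H : G.Subgraph}
    (hac : H.spanningCoe.IsAcyclic) : H.coe.IsAcyclic := by
  intro a c hc
  exact hac (c.map (coeToSpanning' H)) (hc.map Subtype.val_injective)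

/-- The hub-propagation step: if `u ∈ Z` is a hub for `Z`, `∂Z` is a `K`-cut, and
`v ∉ Z` is adjacent to `u`, then `v` is a hub for `Z`. -/
lemma hub_step' {K : ℕ} {G : SimpleGraph V} {Z : Set V} {u v : V}
    (hcut : IsKCut G K Z) (huZ : u ∈ Z) (hvZ : v ∉ Z) (huv : G.Adj u v)
    (hu : IsHub G K Z u) : IsHub G K Z v := by
  classical
  obtain ⟨-, H, hverts, htree, hsafe⟩ := hu
  have hHv : H.verts = Z := by
    rw [hverts, Set.union_singleton, Set.insert_eq_self.mpr huZ]
  set P := G.subgraphOfAdj huv with hP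
  set H' := H ⊔ P with hH'
  have hvH : v ∉ H.verts := by rw [hHv]; exact hvZ
  have huvne : u ≠ v := fun h => hvZ (h ▸ huZ)
  have hverts' : H'.verts = Z ∪ {v} := by
    rw [hH', SimpleGraph.Subgraph.verts_sup, hHv, hP, SimpleGraph.subgraphOfAdj_verts]
    ext x
    simp only [Set.mem_union, Set.mem_insert_iff, Set.mem_singleton_iff]
    constructor
    · rintro (hx | (rfl | rfl))
      · exact Or.inl hx
      · exact Or.inl huZ
      · exact Or.inr rfl
    · rintro (hx | rfl)
      · exact Or.inl hx
      · exact Or.inr (Or.inr rfl)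
  -- endpoints of H-edges lie in Z
  have hmemZ : ∀ e ∈ H.edgeSet, ∀ x ∈ e, x ∈ Z := by
    intro e he
    induction e using Sym2.ind with
    | _ a b =>
      intro x hx
      have hab : H.Adj a b := he
      rcases Sym2.mem_iff.mp hx with rfl | rfl
      · exact hHv ▸ H.edge_vert hab
      · exact hHv ▸ H.edge_vert (H.adj_symm hab)
  refine ⟨⟨s(u, v), ⟨huv, u, v, rfl, huZ, hvZ⟩, by simp⟩, H', hverts', ?_, ?_⟩
  · -- H'.coe is a tree
    constructor
    · -- connected
      have hHc : H.Connected := ⟨htree.isConnected⟩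
      have hn : (H ⊓ P).verts.Nonempty := by
        refine ⟨u, ?_, ?_⟩
        · rw [hHv]; exact huZ
        · rw [hP]; exact Set.mem_insert u {v}
      exact (SimpleGraph.Subgraph.connected_sup hHc.preconnected (SimpleGraph.Subgraph.subgraphOfAdj_connected huv).preconnected hn).coe
    · -- acyclic
      apply coe_acyclic_of_spanning'
      refine acyclic_pendant' (spanning_acyclic_of_coe' htree.IsAcyclic) huvne ?_ ?_
      · intro a b hab
        rcases SimpleGraph.Subgraph.sup_adj.mp hab with h0 | h1
        · exact Or.inl h0
        · exact Or.inr (Eq.symm (show s(u, v) = s(a, b) from h1))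
      · intro a ha
        exact hvH (H.edge_vert ha)
  · -- safe tree
    intro e he
    have hE : H'.edgeSet = H.edgeSet ∪ {s(u, v)} := by
      rw [hH', SimpleGraph.Subgraph.edgeSet_sup, hP, SimpleGraph.edgeSet_subgraphOfAdj]
    rw [hE, Set.mem_union, Set.mem_singleton_iff] at he
    rcases he with heH | rfl
    · -- old edge: treeOut unchanged
      have hvnote : v ∉ e := fun hx => hvZ (hmemZ e heH v hx)
      have hvu_ne : s(v, u) ≠ e := by
        intro h; exact hvnote (h ▸ (by simp : v ∈ s(v, u)))
      have hD'vu : ((H'.deleteEdges {e}).spanningCoe).Adj v u := by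
        refine (SimpleGraph.Subgraph.deleteEdges_adj _ _ _).mpr ⟨?_, by simpa using hvu_ne⟩
        refine SimpleGraph.Subgraph.sup_adj.mpr (Or.inr ?_)
        rw [hP]
        exact (Sym2.eq_swap : s(u, v) = s(v, u))
      have hBle : (H.deleteEdges {e}).spanningCoe ≤ (H'.deleteEdges {e}).spanningCoe := by
        intro a b hab
        obtain ⟨h1, h2⟩ := (SimpleGraph.Subgraph.deleteEdges_adj _ _ _).mp hab
        exact (SimpleGraph.Subgraph.deleteEdges_adj _ _ _).mpr
          ⟨SimpleGraph.Subgraph.sup_adj.mpr (Or.inl h1), h2⟩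
      have claimB : ∀ x, (H.deleteEdges {e}).spanningCoe.Reachable u x →
          (H'.deleteEdges {e}).spanningCoe.Reachable v x := by
        intro x hx
        exact (hD'vu.reachable).trans (hx.mono hBle)
      have claimA : ∀ x, (H'.deleteEdges {e}).spanningCoe.Reachable v x →
          x = v ∨ (H.deleteEdges {e}).spanningCoe.Reachable u x := by
        intro x hx
        refine reach_closed' (S := {v} ∪ {y | (H.deleteEdges {e}).spanningCoe.Reachable u y})
          ?_ hx (Or.inl rfl)
        intro a b hab hA
        obtain ⟨h1, h2⟩ := (SimpleGraph.Subgraph.deleteEdges_adj _ _ _).mp hab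
        rcases SimpleGraph.Subgraph.sup_adj.mp h1 with h3 | h4
        · rcases hA with ha | hRa
          · exfalso
            have hav : a = v := ha
            rw [hav] at h3
            exact hvH (H.edge_vert h3)
          · refine Or.inr (hRa.trans ?_)
            exact SimpleGraph.Adj.reachable
              ((SimpleGraph.Subgraph.deleteEdges_adj _ _ _).mpr ⟨h3, h2⟩)
        · have h4' : s(u, v) = s(a, b) := h4
          rw [Sym2.eq_iff] at h4'
          rcases h4' with ⟨rfl, rfl⟩ | ⟨rfl, rfl⟩
          · exact Or.inl rfl
          · exact Or.inr (SimpleGraph.Reachable.refl _)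
      have key : treeOut G H' v e = treeOut G H u e := by
        ext x
        simp only [treeOut, Set.mem_setOf_eq, hverts', hHv]
        constructor
        · rintro ⟨hx1, hx2⟩
          have hxv : x ≠ v := by rintro rfl; exact hx2 (SimpleGraph.Reachable.refl _)
          have hxZ : x ∈ Z := by
            rcases hx1 with h | h
            · exact h
            · exact absurd h hxv
          exact ⟨hxZ, fun hR => hx2 (claimB x hR)⟩
        · rintro ⟨hx1, hx2⟩
          refine ⟨Or.inl hx1, fun hR' => ?_⟩
          rcases claimA x hR' with rfl | hR
          · exact hvZ hx1
          · exact hx2 hR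
      rw [key]
      exact hsafe e heH
    · -- new edge: treeOut is Z
      have hnov : ∀ x, (H'.deleteEdges {s(u, v)}).spanningCoe.Reachable v x → x = v := by
        intro x hx
        refine reach_closed' (S := {v}) ?_ hx rfl
        intro a b hab ha
        have hav : a = v := ha
        obtain ⟨h1, h2⟩ := (SimpleGraph.Subgraph.deleteEdges_adj _ _ _).mp hab
        exfalso
        rcases SimpleGraph.Subgraph.sup_adj.mp h1 with h3 | h4
        · rw [hav] at h3; exact hvH (H.edge_vert h3)
        · have h4' : s(u, v) = s(a, b) := h4
          apply h2
          simp only [Set.mem_singleton_iff]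
          exact h4'.symm
      have key : treeOut G H' v s(u, v) = Z := by
        ext x
        simp only [treeOut, Set.mem_setOf_eq, hverts']
        constructor
        · rintro ⟨hx1, hx2⟩
          rcases hx1 with h | h
          · exact h
          · exact absurd (h ▸ SimpleGraph.Reachable.refl _ :
              (H'.deleteEdges {s(u, v)}).spanningCoe.Reachable v x) hx2
        · intro hxZ
          exact ⟨Or.inl hxZ, fun hR => hvZ ((hnov x hR) ▸ hxZ)⟩
      rw [key]
      exact hcut.2.2

end AuxHub

/-- (Back spines consist of hubs.) If `w_s, …, w_ℓ` is a back spine,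
then `w_i ∈ H̃(Z_{i-1})` for all `i = s, …, ℓ`. -/
theorem back_spine_hubs {V : Type*} [Fintype V] (K : ℕ)
    (G : SimpleGraph V) (hG : KEdgeConnected G K)
    (s ℓ : ℕ) (hs : 1 ≤ s) (hsl : s ≤ ℓ)
    (Z : ℕ → Set V) (w : ℕ → V)
    (hdisj : ∀ i j, s - 1 ≤ i → i < j → j ≤ ℓ → Disjoint (Z i) (Z j))
    (hcuts : ∀ i, s - 1 ≤ i → i ≤ ℓ - 1 → IsKCut G K (Z i))
    (hpath : ∀ i, s ≤ i → i < ℓ → G.Adj (w i) (w (i + 1)))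
    (hws : w s ∈ Z s ∧ w s ∈ hubSet G K (Z (s - 1)) ∧ w s ∈ hubSet G K (Z s))
    (hwi : ∀ i, s + 1 ≤ i → i ≤ ℓ - 1 → w i ∈ Z i ∧ w i ∈ hubSet G K (Z i))
    (hwl : w ℓ ∈ Z ℓ) :
    ∀ i, s ≤ i → i ≤ ℓ → w i ∈ hubSet G K (Z (i - 1)) := by
  intro i hsi hil
  rcases eq_or_lt_of_le hsi with rfl | hlt
  · exact hws.2.1
  · set j := i - 1 with hj
    have hij : i = j + 1 := by omega
    have hsj : s ≤ j := by omega
    have hjl : j < ℓ := by omega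
    have hjl1 : j ≤ ℓ - 1 := by omega
    have hwj : w j ∈ Z j ∧ w j ∈ hubSet G K (Z j) := by
      rcases eq_or_lt_of_le hsj with heq | hlt2
      · rw [← heq]; exact ⟨hws.1, hws.2.2⟩
      · exact hwi j (by omega) hjl1
    have hwiZ : w i ∈ Z i := by
      rcases eq_or_lt_of_le hil with rfl | hlt2
      · exact hwl
      · exact (hwi i (by omega) (by omega)).1
    have hadj : G.Adj (w j) (w i) := by
      have := hpath j hsj hjl
      rwa [← hij] at this
    have hdis := hdisj j i (by omega) (by omega) hil
    have hviZ : w i ∉ Z j := fun h => Set.disjoint_left.mp hdis h hwiZ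
    have hcutj := hcuts j (by omega) hjl1
    exact hub_step' hcutj hwj.1 hviZ hadj hwj.2
end

section
/- Let G be a K-edge-connected finite simple graph with at least two vertices and let r be a vertex of G of degree exactly K. Then G has a spanning tree of congestion at most K if and only if r is a hub for V(G) ∖ {r}. Consequently, stc(G) = K if and only if r ∈ H̃(V(G) ∖ {r}). -/
open SimpleGraph

variable {V : Type*}

private lemma cutEdges_compl (G : SimpleGraph V) (X : Set V) :
    cutEdges G Xᶜ = cutEdges G X := by
  have h : ∀ Y : Set V, cutEdges G Y ⊆ cutEdges G Yᶜ := by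
    rintro Y e ⟨he, u, v, rfl, hu, hv⟩
    exact ⟨he, v, u, Sym2.eq_swap.symm, by simpa using hv, by simpa using hu⟩
  apply subset_antisymm
  · have := h Xᶜ; simpa using this
  · exact h X

private lemma reach_or {T : SimpleGraph V} {u v : V} {a x : V} (w : T.Walk a x)
    (h : (T.deleteEdges {s(u,v)}).Reachable u a ∨ (T.deleteEdges {s(u,v)}).Reachable v a) :
    (T.deleteEdges {s(u,v)}).Reachable u x ∨ (T.deleteEdges {s(u,v)}).Reachable v x := by
  induction w with
  | nil => exact h
  | @cons a b x hab p ih =>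
    apply ih
    by_cases he : s(a, b) = s(u, v)
    · rw [Sym2.eq_iff] at he
      rcases he with ⟨rfl, rfl⟩ | ⟨rfl, rfl⟩
      · exact Or.inr (Reachable.refl _)
      · exact Or.inl (Reachable.refl _)
    · have hadj : (T.deleteEdges {s(u,v)}).Adj a b := by
        rw [deleteEdges_adj]; exact ⟨hab, by simpa using he⟩
      rcases h with h | h
      · exact Or.inl (h.trans hadj.reachable)
      · exact Or.inr (h.trans hadj.reachable)

private lemma tree_side_or {T : SimpleGraph V} (hT : T.Connected) (u v : V) (x : V) :
    (T.deleteEdges {s(u,v)}).Reachable u x ∨ (T.deleteEdges {s(u,v)}).Reachable v x := by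
  obtain ⟨w⟩ := hT.preconnected u x
  exact reach_or w (Or.inl (Reachable.refl u))

private lemma not_reach_del {T : SimpleGraph V} (hT : T.IsAcyclic) {u v : V} (h : T.Adj u v) :
    ¬ (T.deleteEdges {s(u,v)}).Reachable u v := by
  have hb := isAcyclic_iff_forall_adj_isBridge.mp hT h
  rw [isBridge_iff] at hb
  exact hb

private lemma mem_treeSide_iff {T : SimpleGraph V} (hT : T.IsTree) {u v : V} (h : T.Adj u v)
    (x : V) : x ∈ treeSide T u s(u,v) ↔ x ∉ treeSide T v s(u,v) := by
  constructor
  · intro hu hv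
    exact not_reach_del hT.2 h
      ((hu : (T.deleteEdges _).Reachable u x).trans
        (hv : (T.deleteEdges _).Reachable v x).symm)
  · intro hv
    exact (tree_side_or hT.1 u v x).resolve_right hv

private lemma treeSide_eq_of_mem {T : SimpleGraph V} {u x : V} {e : Sym2 V}
    (hx : x ∈ treeSide T u e) : treeSide T x e = treeSide T u e := by
  ext y
  exact ⟨fun hy => (hx : (T.deleteEdges _).Reachable u x).trans hy,
    fun hy => (hx : (T.deleteEdges _).Reachable u x).symm.trans hy⟩

private lemma treeSide_compl {T : SimpleGraph V} (hT : T.IsTree) {u v : V} (h : T.Adj u v) :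
    treeSide T v s(u,v) = (treeSide T u s(u,v))ᶜ := by
  ext x
  rw [Set.mem_compl_iff, mem_treeSide_iff hT h x]
  tauto

private lemma cut_root_eq (G : SimpleGraph V) {T : SimpleGraph V} (hT : T.IsTree) {u v : V}
    (h : T.Adj u v) (r : V) :
    cutEdges G (treeSide T r s(u,v)) = cutEdges G (treeSide T u s(u,v)) := by
  rcases tree_side_or hT.1 u v r with hr | hr
  · rw [treeSide_eq_of_mem (hx := hr)]
  · rw [treeSide_eq_of_mem (hx := hr), treeSide_compl hT h, cutEdges_compl]

private lemma treeOut_eq (G : SimpleGraph V) (H : G.Subgraph) (hV : H.verts = Set.univ)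
    (r : V) (e : Sym2 V) :
    treeOut G H r e = (treeSide H.spanningCoe r e)ᶜ := by
  have hdel : (H.deleteEdges {e}).spanningCoe = H.spanningCoe.deleteEdges {e} := by
    ext x y
    simp only [Subgraph.spanningCoe_adj, Subgraph.deleteEdges_adj,
      SimpleGraph.deleteEdges_adj]
  ext x
  simp only [treeOut, hV, hdel, treeSide, Set.mem_univ, true_and, Set.mem_setOf_eq,
    Set.mem_compl_iff]

private lemma isTree_of_iso {W W' : Type*} {A : SimpleGraph W} {B : SimpleGraph W'}
    (e : A ≃g B) (h : A.IsTree) : B.IsTree := by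
  constructor
  · exact e.connected_iff.mp h.1
  · intro v c hc
    exact h.2 (c.map e.symm.toHom)
      ((SimpleGraph.Walk.map_isCycle_iff_of_injective e.symm.injective).mpr hc)

private lemma exists_adj_of_connected {G : SimpleGraph V} (h : G.Connected)
    (hnt : Nontrivial V) (r : V) : ∃ v, G.Adj r v := by
  haveI := hnt
  obtain ⟨w, hw⟩ := exists_ne r
  obtain ⟨p⟩ := h.preconnected r w
  cases p with
  | nil => exact absurd rfl hw
  | cons h' _ => exact ⟨_, h'⟩

private lemma K_le_edgeCong {G : SimpleGraph V} {K : ℕ} (hG : KEdgeConnected G K)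
    {T : SimpleGraph V} (hT : T.IsTree) {u v : V} (h : T.Adj u v) :
    K ≤ edgeCong G T u v := by
  apply hG.2.2
  · exact ⟨u, Reachable.refl u⟩
  · intro hX
    have hv : v ∈ treeSide T u s(u,v) := hX ▸ Set.mem_univ v
    exact not_reach_del hT.2 h hv

private lemma edgeCong_eq {G : SimpleGraph V} {K : ℕ} (hG : KEdgeConnected G K)
    {T : SimpleGraph V} (hT : T.IsTree) (hC : CongAtMost G T K) {u v : V} (h : T.Adj u v) :
    edgeCong G T u v = K :=
  le_antisymm (hC u v h) (K_le_edgeCong hG hT h)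

private lemma congSet_bddAbove [Fintype V] (G T : SimpleGraph V) :
    BddAbove {n | ∃ u v, T.Adj u v ∧ n = edgeCong G T u v} := by
  refine ⟨(Set.univ : Set (Sym2 V)).ncard, ?_⟩
  rintro n ⟨u, v, _, rfl⟩
  exact Set.ncard_le_ncard (Set.subset_univ _) Set.finite_univ

private lemma treeCongestion_eq_K {G T : SimpleGraph V} {K : ℕ}
    (hne : ∃ u v, T.Adj u v) (hall : ∀ u v, T.Adj u v → edgeCong G T u v = K) :
    treeCongestion G T = K := by
  have hset : {n | ∃ u v, T.Adj u v ∧ n = edgeCong G T u v} = {K} := by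
    ext n
    simp only [Set.mem_setOf_eq, Set.mem_singleton_iff]
    constructor
    · rintro ⟨u, v, h, rfl⟩; exact hall u v h
    · rintro rfl; obtain ⟨u, v, h⟩ := hne; exact ⟨u, v, h, (hall u v h).symm⟩
  rw [treeCongestion, hset, csSup_singleton]

/-- Let `r` be a vertex of degree exactly `K` in a `K`-edge-connected
graph `G`. Then `G` has a spanning tree of congestion at most `K` iff `r` is a hub for
`V ∖ {r}`; consequently `stc(G) = K` iff `r ∈ H̃(V ∖ {r})`. -/
theorem stc_eq_iff_root_hub {V : Type*} [Fintype V] (K : ℕ)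
    (G : SimpleGraph V) (hG : KEdgeConnected G K)
    (r : V) (hdeg : (G.neighborSet r).ncard = K) :
    ((∃ T : SimpleGraph V, T ≤ G ∧ T.IsTree ∧ CongAtMost G T K) ↔
        IsHub G K ({r}ᶜ) r) ∧
    (stc G = K ↔ r ∈ hubSet G K ({r}ᶜ)) := by
  have hnt : Nontrivial V := hG.1
  obtain ⟨v0, hv0⟩ := exists_adj_of_connected hG.2.1 hnt r
  have hKpos : 0 < K := by
    rw [← hdeg, Set.ncard_pos (Set.toFinite _)]
    exact ⟨v0, hv0⟩
  have fwd : (∃ T : SimpleGraph V, T ≤ G ∧ T.IsTree ∧ CongAtMost G T K) →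
      IsHub G K ({r}ᶜ) r := by
    rintro ⟨T, hle, hT, hC⟩
    constructor
    · refine ⟨s(v0, r), ⟨hv0.symm, v0, r, rfl, ?_, ?_⟩, Sym2.mem_mk_right _ _⟩
      · exact hv0.ne'
      · simp
    · refine ⟨⟨Set.univ, T.Adj, fun hab => hle hab, fun _ => Set.mem_univ _, T.symm⟩,
        ?_, ?_, ?_⟩
      · exact (Set.compl_union_self {r}).symm
      · exact isTree_of_iso
          (Subgraph.spanningCoeEquivCoeOfSpanning _ (fun v => Set.mem_univ v)) hT
      · intro e he
        induction e using Sym2.ind with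
        | _ u v =>
          rw [Subgraph.mem_edgeSet] at he
          have he' : T.Adj u v := he
          rw [treeOut_eq G _ rfl r s(u,v)]
          have hspan : Subgraph.spanningCoe
              ⟨Set.univ, T.Adj, fun hab => hle hab, fun _ => Set.mem_univ _, T.symm⟩ = T := by
            ext x y; exact Iff.rfl
          rw [hspan, cutEdges_compl, cut_root_eq G hT he' r]
          exact edgeCong_eq hG hT hC he'
  have bwd : IsHub G K ({r}ᶜ) r →
      (∃ T : SimpleGraph V, T ≤ G ∧ T.IsTree ∧ CongAtMost G T K) := by
    rintro ⟨-, H, hverts, htree, hsafe⟩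
    have huniv : H.verts = Set.univ := by rw [hverts]; exact Set.compl_union_self _
    have hspanning : H.IsSpanning := fun v => by rw [huniv]; trivial
    have hT : H.spanningCoe.IsTree :=
      isTree_of_iso (H.spanningCoeEquivCoeOfSpanning hspanning).symm htree
    refine ⟨H.spanningCoe, H.spanningCoe_le, hT, ?_⟩
    intro u v huv
    have huv' : H.Adj u v := huv
    have hK := hsafe s(u,v) (Subgraph.mem_edgeSet.mpr huv')
    rw [treeOut_eq G H huniv r s(u,v), cutEdges_compl,
      cut_root_eq G hT huv r] at hK
    exact le_of_eq hK
  refine ⟨⟨fwd, bwd⟩, ?_, ?_⟩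
  · intro hstc
    have hSne : {n | ∃ T : SimpleGraph V, T ≤ G ∧ T.IsTree ∧
        treeCongestion G T = n}.Nonempty := by
      by_contra hemp
      rw [Set.not_nonempty_iff_eq_empty] at hemp
      rw [stc, hemp, Nat.sInf_empty] at hstc
      omega
    obtain ⟨T, hle, hT, hcong⟩ := Nat.sInf_mem hSne
    have hcongK : treeCongestion G T = K := by rw [hcong]; exact hstc
    have hC : CongAtMost G T K := by
      intro u v h
      have := le_csSup (congSet_bddAbove G T) (⟨u, v, h, rfl⟩ :
        edgeCong G T u v ∈ {n | ∃ u v, T.Adj u v ∧ n = edgeCong G T u v})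
      rw [← treeCongestion] at this
      exact hcongK ▸ this
    exact fwd ⟨T, hle, hT, hC⟩
  · intro hhub
    obtain ⟨T, hle, hT, hC⟩ := bwd hhub
    obtain ⟨w0, hw0⟩ := exists_adj_of_connected hT.1 hnt r
    have hKmem : K ∈ {n | ∃ T : SimpleGraph V, T ≤ G ∧ T.IsTree ∧
        treeCongestion G T = n} :=
      ⟨T, hle, hT, treeCongestion_eq_K ⟨r, w0, hw0⟩
        (fun u v h => edgeCong_eq hG hT hC h)⟩
    apply le_antisymm
    · exact Nat.sInf_le hKmem
    · apply le_csInf ⟨K, hKmem⟩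
      rintro n ⟨T', hle', hT', rfl⟩
      obtain ⟨w, hw⟩ := exists_adj_of_connected hT'.1 hnt r
      calc K ≤ edgeCong G T' r w := K_le_edgeCong hG hT' hw
        _ ≤ treeCongestion G T' :=
          le_csSup (congSet_bddAbove G T') ⟨r, w, hw, rfl⟩
end
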